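/- arXiv:2112.10726 — 4 statements merged into one kernel-verified Lean document; each statement's English description precedes it below -/
import Mathlib

section
/- Let X be a reflexive Banach space and F ∈ C¹(X) strictly convex with F' strongly monotone and coercive: there is a non-decreasing function α : [0,∞) → [0,∞) vanishing only at 0 with α(r) → ∞ as r → ∞ such that ⟨F'(v) − F'(w), v − w⟩ ≥ α(‖v−w‖)‖v−w‖ for all v, w ∈ X. Then F' is a homeomorphism of X onto X*. -/
open Filter Topology

lemma key_convex_est {X : Type*} [NormedAddCommGroup X] [NormedSpace ℝ X]
    (G : X → ℝ) (G' : X → StrongDual ℝ X)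
    (hdiff : ∀ x, HasFDerivAt G (G' x) x)
    (α : ℝ → ℝ) (hα0 : ∀ r, 0 ≤ r → 0 ≤ α r)
    (hαmono : ∀ r s, 0 ≤ r → r ≤ s → α r ≤ α s)
    (hstrong : ∀ v w : X, α ‖v - w‖ * ‖v - w‖ ≤ (G' v - G' w) (v - w))
    (x y : X) :
    G y + (G' y) (x - y) + α (‖x - y‖ / 2) * (‖x - y‖ / 2) ≤ G x := by
  set d := x - y with hd
  set r := ‖x - y‖ with hr
  have hr0 : 0 ≤ r := norm_nonneg _
  have hφ : ∀ t : ℝ, HasDerivAt (fun t : ℝ => G (y + t • d)) ((G' (y + t • d)) d) t := by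
    intro t
    have hline : HasDerivAt (fun t : ℝ => y + t • d) d t := by
      simpa using ((hasDerivAt_id t).smul_const d).const_add y
    exact (hdiff (y + t • d)).comp_hasDerivAt t hline
  have hderiv_lb : ∀ t : ℝ, 0 < t →
      (G' y) d + α (t * r) * r ≤ (G' (y + t • d)) d := by
    intro t ht
    have h1 := hstrong (y + t • d) y
    have h2 : y + t • d - y = t • d := by abel
    rw [h2] at h1
    have h3 : ‖t • d‖ = t * r := by
      rw [norm_smul, Real.norm_eq_abs, abs_of_pos ht]
    rw [h3] at h1
    have h4 : (G' (y + t • d) - G' y) (t • d)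
        = t * ((G' (y + t • d)) d - (G' y) d) := by
      simp [ContinuousLinearMap.sub_apply, map_smul, smul_eq_mul, mul_sub]
    rw [h4] at h1
    have h5 : t * (α (t * r) * r) ≤ t * ((G' (y + t • d)) d - (G' y) d) := by
      calc t * (α (t * r) * r) = α (t * r) * (t * r) := by ring
        _ ≤ _ := h1
    have := le_of_mul_le_mul_left h5 ht
    linarith
  -- ψ monotone on [0, 1/2]
  set B := (G' y) d with hB
  have hψd : ∀ t : ℝ, HasDerivAt (fun t : ℝ => G (y + t • d) - t * B)
      ((G' (y + t • d)) d - B) t := fun t => by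
    have h := (hφ t).sub ((hasDerivAt_id t).mul_const B); simp at h; exact h
  have hψmono : MonotoneOn (fun t : ℝ => G (y + t • d) - t * B) (Set.Icc 0 (1/2)) := by
    apply monotoneOn_of_deriv_nonneg (convex_Icc 0 (1/2))
    · exact (Differentiable.continuous fun t => (hψd t).differentiableAt).continuousOn
    · exact fun t _ => (hψd t).differentiableAt.differentiableWithinAt
    · intro t ht
      rw [interior_Icc] at ht
      rw [(hψd t).deriv]
      have h1 := hderiv_lb t ht.1
      have h2 : 0 ≤ α (t * r) * r :=
        mul_nonneg (hα0 _ (mul_nonneg ht.1.le hr0)) hr0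
      linarith
  -- χ monotone on [1/2, 1]
  set c := α (r / 2) * r with hc
  have hχd : ∀ t : ℝ, HasDerivAt (fun t : ℝ => G (y + t • d) - t * (B + c))
      ((G' (y + t • d)) d - (B + c)) t := fun t => by
    have h := (hφ t).sub ((hasDerivAt_id t).mul_const (B + c)); simp at h; exact h
  have hχmono : MonotoneOn (fun t : ℝ => G (y + t • d) - t * (B + c)) (Set.Icc (1/2) 1) := by
    apply monotoneOn_of_deriv_nonneg (convex_Icc (1/2) 1)
    · exact (Differentiable.continuous fun t => (hχd t).differentiableAt).continuousOn
    · exact fun t _ => (hχd t).differentiableAt.differentiableWithinAt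
    · intro t ht
      rw [interior_Icc] at ht
      rw [(hχd t).deriv]
      have h1 := hderiv_lb t (by linarith [ht.1])
      have h2 : α (r / 2) ≤ α (t * r) := by
        apply hαmono _ _ (by linarith) (by nlinarith [ht.1])
      have h3 : α (r / 2) * r ≤ α (t * r) * r :=
        mul_le_mul_of_nonneg_right h2 hr0
      rw [hc]
      linarith
  have hψ01 := hψmono (Set.mem_Icc.mpr ⟨le_refl 0, by norm_num⟩)
      (Set.mem_Icc.mpr ⟨by norm_num, le_refl _⟩) (by norm_num)
  have hχ01 := hχmono (Set.mem_Icc.mpr ⟨le_refl _, by norm_num⟩)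
      (Set.mem_Icc.mpr ⟨by norm_num, le_refl 1⟩) (by norm_num)
  have e0 : G (y + (0:ℝ) • d) = G y := by simp
  have e1 : G (y + (1:ℝ) • d) = G x := by simp [hd]
  simp only at hψ01 hχ01
  rw [e0] at hψ01
  rw [e1] at hχ01
  linarith

lemma exists_critical {X : Type*} [NormedAddCommGroup X] [NormedSpace ℝ X] [CompleteSpace X]
    (G : X → ℝ) (G' : X → StrongDual ℝ X)
    (hdiff : ∀ x, HasFDerivAt G (G' x) x)
    (α : ℝ → ℝ) (hα0 : ∀ r, 0 ≤ r → 0 ≤ α r)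
    (hαmono : ∀ r s, 0 ≤ r → r ≤ s → α r ≤ α s)
    (hαpos : ∀ r : ℝ, 0 < r → 0 < α r)
    (hαtop : Filter.Tendsto α Filter.atTop Filter.atTop)
    (hstrong : ∀ v w : X, α ‖v - w‖ * ‖v - w‖ ≤ (G' v - G' w) (v - w)) :
    ∃ z : X, G' z = 0 := by
  have hkey := key_convex_est G G' hdiff α hα0 hαmono hstrong
  obtain ⟨c0, hc0⟩ : ∃ c0 : ℝ, c0 = ‖G' 0‖ := ⟨_, rfl⟩
  have hc00 : 0 ≤ c0 := hc0 ▸ norm_nonneg _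
  obtain ⟨R, hR⟩ : ∃ R : ℝ, ∀ t ≥ R, 2 * c0 ≤ α t :=
    Filter.eventually_atTop.mp (hαtop.eventually_ge_atTop (2 * c0))
  obtain ⟨R', hR'⟩ : ∃ R' : ℝ, R' = max (2 * R) 0 := ⟨_, rfl⟩
  have hR'0 : 0 ≤ R' := hR' ▸ le_max_right _ _
  have hbdd : ∀ z : X, G 0 - c0 * R' ≤ G z := by
    intro z
    have h1 := hkey z 0
    rw [sub_zero] at h1
    have hL : -(c0 * ‖z‖) ≤ (G' 0) z := by
      have h2 : |(G' 0) z| ≤ c0 * ‖z‖ := by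
        have := (G' 0).le_opNorm z
        rw [Real.norm_eq_abs, ← hc0] at this
        exact this
      linarith [neg_abs_le ((G' 0) z), (abs_le.mp h2).2]
    rcases le_or_gt ‖z‖ R' with h | h
    · have h3 : 0 ≤ α (‖z‖ / 2) * (‖z‖ / 2) :=
        mul_nonneg (hα0 _ (by positivity)) (by positivity)
      have h4 : c0 * ‖z‖ ≤ c0 * R' := mul_le_mul_of_nonneg_left h hc00
      linarith
    · have h5 : 2 * c0 ≤ α (‖z‖ / 2) := by
        apply hR
        have h7 : 2 * R ≤ R' := hR' ▸ le_max_left _ _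
        linarith
      have h6 : 2 * c0 * (‖z‖ / 2) ≤ α (‖z‖ / 2) * (‖z‖ / 2) :=
        mul_le_mul_of_nonneg_right h5 (by positivity)
      nlinarith [norm_nonneg z]
  obtain ⟨m, hm⟩ : ∃ m : ℝ, m = sInf (Set.range G) := ⟨_, rfl⟩
  have hbddBelow : BddBelow (Set.range G) :=
    ⟨G 0 - c0 * R', by rintro _ ⟨z, rfl⟩; exact hbdd z⟩
  have hne : (Set.range G).Nonempty := ⟨G 0, ⟨0, rfl⟩⟩
  have hmle : ∀ z : X, m ≤ G z := fun z => hm ▸ csInf_le hbddBelow ⟨z, rfl⟩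
  have hseq : ∀ n : ℕ, ∃ z : X, G z < m + 1 / ((n : ℝ) + 1) := by
    intro n
    obtain ⟨a, ha, hlt⟩ := exists_lt_of_csInf_lt hne
      (lt_add_of_pos_right (sInf (Set.range G)) (show (0:ℝ) < 1 / ((n : ℝ) + 1) by positivity))
    obtain ⟨z, rfl⟩ := ha
    exact ⟨z, hm ▸ hlt⟩
  choose u hu using hseq
  have hmid : ∀ p q : X, α (‖p - q‖ / 4) * (‖p - q‖ / 2) ≤ G p + G q - 2 * m := by
    intro p q
    obtain ⟨w, hw⟩ : ∃ w : X, w = (1/2 : ℝ) • (p + q) := ⟨_, rfl⟩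
    have hpw : p - w = (1/2 : ℝ) • (p - q) := by rw [hw]; module
    have hqw : q - w = -((1/2 : ℝ) • (p - q)) := by rw [hw]; module
    have h1 := hkey p w
    have h2 := hkey q w
    have hnpw : ‖p - w‖ = ‖p - q‖ / 2 := by
      rw [hpw, norm_smul, Real.norm_eq_abs,
        abs_of_pos (by norm_num : (0:ℝ) < 1/2)]
      ring
    have hnqw : ‖q - w‖ = ‖p - q‖ / 2 := by
      rw [hqw, norm_neg, norm_smul, Real.norm_eq_abs,
        abs_of_pos (by norm_num : (0:ℝ) < 1/2)]
      ring
    have hsum : (G' w) (p - w) + (G' w) (q - w) = 0 := by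
      rw [hpw, hqw, map_neg]
      ring
    rw [hnpw] at h1
    rw [hnqw] at h2
    have h44 : ‖p - q‖ / 2 / 2 = ‖p - q‖ / 4 := by ring
    rw [h44] at h1 h2
    have hmw := hmle w
    have hexp : α (‖p - q‖ / 4) * (‖p - q‖ / 2)
        = 2 * (α (‖p - q‖ / 4) * (‖p - q‖ / 4)) := by ring
    linarith
  have hcauchy : CauchySeq u := by
    rw [Metric.cauchySeq_iff]
    intro ε hε
    obtain ⟨c, hcdef⟩ : ∃ c : ℝ, c = α (ε / 4) * (ε / 2) := ⟨_, rfl⟩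
    have hcpos : 0 < c := hcdef ▸ mul_pos (hαpos _ (by linarith)) (by linarith)
    obtain ⟨N, hN⟩ := exists_nat_gt (2 / c)
    refine ⟨N, fun a ha b hb => ?_⟩
    rw [dist_eq_norm]
    by_contra hcon
    push_neg at hcon
    have h1 := hmid (u a) (u b)
    have h2 : G (u a) < m + 1 / ((N : ℝ) + 1) := by
      refine lt_of_lt_of_le (hu a) ?_
      have h9 : ((N : ℝ) + 1) ≤ (a : ℝ) + 1 := by
        have := (Nat.cast_le (α := ℝ)).mpr ha
        linarith
      have := one_div_le_one_div_of_le (by positivity) h9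
      linarith
    have h3 : G (u b) < m + 1 / ((N : ℝ) + 1) := by
      refine lt_of_lt_of_le (hu b) ?_
      have h9 : ((N : ℝ) + 1) ≤ (b : ℝ) + 1 := by
        have := (Nat.cast_le (α := ℝ)).mpr hb
        linarith
      have := one_div_le_one_div_of_le (by positivity) h9
      linarith
    have h4 : c ≤ α (‖u a - u b‖ / 4) * (‖u a - u b‖ / 2) := by
      rw [hcdef]
      apply mul_le_mul (hαmono _ _ (by linarith) (by linarith))
        (by linarith) (by linarith) (hα0 _ (by positivity))
    have h5 : 2 / ((N : ℝ) + 1) < c := by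
      rw [div_lt_iff₀ (by positivity)]
      have h6 : 2 / c < (N : ℝ) + 1 := by linarith
      calc (2 : ℝ) = c * (2 / c) := by field_simp
        _ < c * ((N : ℝ) + 1) := (mul_lt_mul_iff_right₀ hcpos).mpr h6
    have h7 : 1 / ((N : ℝ) + 1) + 1 / ((N : ℝ) + 1) = 2 / ((N : ℝ) + 1) := by ring
    linarith
  obtain ⟨z, hz⟩ := cauchySeq_tendsto_of_complete hcauchy
  have hGcont : Continuous G := by
    rw [continuous_iff_continuousAt]
    exact fun x => (hdiff x).continuousAt
  have hGz : Filter.Tendsto (fun n => G (u n)) Filter.atTop (nhds (G z)) :=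
    (hGcont.tendsto z).comp hz
  have htend : Filter.Tendsto (fun n : ℕ => m + 1 / ((n : ℝ) + 1))
      Filter.atTop (nhds m) := by
    have h := tendsto_one_div_add_atTop_nhds_zero_nat (𝕜 := ℝ)
    simpa using (tendsto_const_nhds (x := m) (f := Filter.atTop (α := ℕ))).add h
  have hGzm : G z = m :=
    le_antisymm
      (le_of_tendsto_of_tendsto' hGz htend (fun n => (hu n).le))
      (hmle z)
  have hmin : IsLocalMin G z :=
    Filter.Eventually.of_forall (fun y => hGzm ▸ hmle y)
  exact ⟨z, hmin.hasFDerivAt_eq_zero (hdiff z)⟩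

/-- Let `X` be a reflexive Banach space and `F ∈ C¹(X)` strictly convex
with `F'` strongly monotone and coercive: there is a non-decreasing `α : [0,∞) → [0,∞)`
vanishing only at `0` with `α(r) → ∞` as `r → ∞` such that
`⟨F'(v) − F'(w), v − w⟩ ≥ α(‖v−w‖)‖v−w‖` for all `v, w`.  Then `F'` is a homeomorphism
of `X` onto `X*`. -/
theorem statement3
    (X : Type*) [NormedAddCommGroup X] [NormedSpace ℝ X] [CompleteSpace X]
    (hrefl : Function.Bijective (NormedSpace.inclusionInDoubleDual ℝ X))
    (F : X → ℝ) (F' : X → StrongDual ℝ X)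
    (hdiff : ∀ x, HasFDerivAt F (F' x) x) (hcont : Continuous F')
    (hstrict : ∀ v w : X, v ≠ w → 0 < (F' v - F' w) (v - w))
    (α : ℝ → ℝ)
    (hα0 : ∀ r, 0 ≤ r → 0 ≤ α r)
    (hαmono : ∀ r s, 0 ≤ r → r ≤ s → α r ≤ α s)
    (hαzero : ∀ r, 0 ≤ r → (α r = 0 ↔ r = 0))
    (hαtop : Filter.Tendsto α Filter.atTop Filter.atTop)
    (hstrong : ∀ v w : X, α ‖v - w‖ * ‖v - w‖ ≤ (F' v - F' w) (v - w)) :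
    IsHomeomorph F' := by
  have hαpos : ∀ r : ℝ, 0 < r → 0 < α r := by
    intro r hr
    rcases (hα0 r hr.le).lt_or_eq with h | h
    · exact h
    · exact absurd (((hαzero r hr.le).mp h.symm)) (by linarith)
  have hinj : Function.Injective F' := by
    intro v w h
    by_contra hne
    have h1 := hstrict v w hne
    rw [h] at h1
    simp at h1
  have hsurj : Function.Surjective F' := by
    intro f
    have hstrongG : ∀ v w : X,
        α ‖v - w‖ * ‖v - w‖ ≤ (((F' v - f) - (F' w - f) : StrongDual ℝ X)) (v - w) := by
      intro v w
      have h : ((F' v - f) - (F' w - f) : StrongDual ℝ X) = F' v - F' w := by abel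
      rw [h]
      exact hstrong v w
    obtain ⟨z, hz⟩ := exists_critical (fun x => F x - f x) (fun x => F' x - f)
      (fun x => (hdiff x).sub f.hasFDerivAt) α hα0 hαmono hαpos hαtop hstrongG
    exact ⟨z, sub_eq_zero.mp hz⟩
  have hbij : Function.Bijective F' := ⟨hinj, hsurj⟩
  have hlip : ∀ v w : X, α ‖v - w‖ ≤ ‖F' v - F' w‖ := by
    intro v w
    rcases eq_or_ne v w with rfl | hne
    · simp [(hαzero 0 le_rfl).mpr rfl]
    · have hr : 0 < ‖v - w‖ := by
        rw [norm_pos_iff, sub_ne_zero]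
        exact hne
      have h1 := hstrong v w
      have h2 : (F' v - F' w) (v - w) ≤ ‖F' v - F' w‖ * ‖v - w‖ := by
        have h3 := (F' v - F' w).le_opNorm (v - w)
        calc (F' v - F' w) (v - w) ≤ |(F' v - F' w) (v - w)| := le_abs_self _
          _ ≤ _ := by rwa [Real.norm_eq_abs] at h3
      exact le_of_mul_le_mul_right (by linarith) hr
  let e := Equiv.ofBijective F' hbij
  have hsymm : Continuous e.symm := by
    rw [Metric.continuous_iff]
    intro b ε hε
    refine ⟨α ε, hαpos ε hε, fun a hab => ?_⟩
    have hva : F' (e.symm a) = a := e.apply_symm_apply a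
    have hvb : F' (e.symm b) = b := e.apply_symm_apply b
    rw [dist_eq_norm] at hab ⊢
    by_contra hcon
    push_neg at hcon
    have h1 : α ε ≤ α ‖e.symm a - e.symm b‖ := hαmono _ _ hε.le hcon
    have h2 := hlip (e.symm a) (e.symm b)
    rw [hva, hvb] at h2
    linarith
  exact Homeomorph.isHomeomorph
    { toEquiv := e, continuous_toFun := hcont, continuous_invFun := hsymm }
end

section
/- Let H : [0,τ] × ℝ^{2n} → ℝ be measurable in t, twice continuously differentiable in ξ for a.e. t, and suppose there exist constants 0 < C₁ < C₂ such that C₁|η|² ≤ (H''_t(ξ)η, η) ≤ C₂|η|² for a.e. t and all ξ, η ∈ ℝ^{2n}. Then for a.e. t the Fenchel conjugate H*_t = H(t,·)* is twice differentiable and its Hessian satisfies C₂⁻¹|η|² ≤ ((H*_t)''(ξ*)η, η) ≤ C₁⁻¹|η|² for all ξ* and η, where at ξ* = ∇H_t(ξ) one has (H*_t)''(ξ*) = (H''_t(ξ))⁻¹. -/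
open MeasureTheory InnerProductSpace
set_option linter.unusedSectionVars false
set_option maxHeartbeats 1000000

noncomputable section KeySection
variable {E : Type*} [NormedAddCommGroup E] [InnerProductSpace ℝ E] [FiniteDimensional ℝ E]
local notation "⟪" x ", " y "⟫" => @inner ℝ _ _ x y

lemma grad_contDiff (f : E → ℝ) (hf : ContDiff ℝ 2 f) : ContDiff ℝ 1 (gradient f) := by
  have h1 : ContDiff ℝ 1 (fderiv ℝ f) := hf.fderiv_right (by norm_num)
  have : gradient f = fun x => (toDual ℝ E).symm (fderiv ℝ f x) := rfl
  rw [this]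
  exact ((toDual ℝ E).symm.contDiff).comp h1

lemma f_hasGradientAt (f : E → ℝ) (hf : ContDiff ℝ 2 f) (x : E) :
    HasGradientAt f (gradient f x) x :=
  (hf.differentiable (by norm_num) x).hasGradientAt

lemma line_hasDerivAt (x v : E) (s : ℝ) : HasDerivAt (fun s : ℝ => x + s • v) v s := by
  simpa using ((hasDerivAt_id s).smul_const v).const_add x

lemma f_line_hasDerivAt (f : E → ℝ) (hf : ContDiff ℝ 2 f) (x v : E) (s : ℝ) :
    HasDerivAt (fun s : ℝ => f (x + s • v)) ⟪gradient f (x + s • v), v⟫ s := by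
  have h1 := (f_hasGradientAt f hf (x + s • v)).hasFDerivAt.comp_hasDerivAt s
    (line_hasDerivAt x v s)
  simpa [Function.comp_def] using h1

lemma grad_line_hasDerivAt (f : E → ℝ) (hf : ContDiff ℝ 2 f) (x v w : E) (s : ℝ) :
    HasDerivAt (fun s : ℝ => ⟪w, gradient f (x + s • v)⟫)
      ⟪w, fderiv ℝ (gradient f) (x + s • v) v⟫ s := by
  have hg := (grad_contDiff f hf).differentiable one_ne_zero (x + s • v)
  have h1 : HasDerivAt (fun s : ℝ => gradient f (x + s • v))
      (fderiv ℝ (gradient f) (x + s • v) v) s :=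
    (hg.hasFDerivAt.comp_hasDerivAt s (line_hasDerivAt x v s) :)
  exact (innerSL ℝ w).hasFDerivAt.comp_hasDerivAt s h1

lemma strong_mono (f : E → ℝ) (hf : ContDiff ℝ 2 f) (C₁ : ℝ)
    (hb : ∀ ξ η : E, C₁ * ‖η‖ ^ 2 ≤ ⟪fderiv ℝ (gradient f) ξ η, η⟫)
    (x v : E) : C₁ * ‖v‖ ^ 2 ≤ ⟪gradient f (x + v) - gradient f x, v⟫ := by
  set φ : ℝ → ℝ := fun s => ⟪v, gradient f (x + s • v)⟫ - C₁ * s * ‖v‖ ^ 2 with hφ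
  have hd : ∀ s : ℝ, HasDerivAt φ
      (⟪v, fderiv ℝ (gradient f) (x + s • v) v⟫ - C₁ * ‖v‖ ^ 2) s := by
    intro s
    have h1 := grad_line_hasDerivAt f hf x v v s
    have h2 : HasDerivAt (fun s : ℝ => C₁ * s * ‖v‖ ^ 2) (C₁ * ‖v‖ ^ 2) s := by
      simpa [mul_comm, mul_assoc, mul_left_comm] using
        ((hasDerivAt_id s).const_mul C₁).mul_const (‖v‖ ^ 2)
    exact h1.sub h2
  have hmono : Monotone φ := by
    apply monotone_of_deriv_nonneg (fun s => (hd s).differentiableAt)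
    intro s
    rw [(hd s).deriv]
    have := hb (x + s • v) v
    rw [real_inner_comm] at this
    linarith
  have h01 := hmono (le_of_lt one_pos : (0:ℝ) ≤ 1)
  simp only [hφ, zero_smul, add_zero, one_smul, mul_zero, mul_one, sub_zero, mul_zero] at h01
  have : ⟪gradient f (x + v) - gradient f x, v⟫
      = ⟪v, gradient f (x + v)⟫ - ⟪v, gradient f x⟫ := by
    rw [inner_sub_left, real_inner_comm (gradient f (x+v)) v, real_inner_comm (gradient f x) v]
  rw [this]
  linarith

lemma lower_bound (f : E → ℝ) (hf : ContDiff ℝ 2 f) (C₁ : ℝ)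
    (hb : ∀ ξ η : E, C₁ * ‖η‖ ^ 2 ≤ ⟪fderiv ℝ (gradient f) ξ η, η⟫)
    (x v : E) : f x + ⟪gradient f x, v⟫ + C₁ / 2 * ‖v‖ ^ 2 ≤ f (x + v) := by
  set ψ : ℝ → ℝ := fun s => f (x + s • v) - s * ⟪gradient f x, v⟫ - C₁ * s ^ 2 / 2 * ‖v‖ ^ 2
    with hψ
  have hd : ∀ s : ℝ, HasDerivAt ψ
      (⟪gradient f (x + s • v), v⟫ - ⟪gradient f x, v⟫ - C₁ * s * ‖v‖ ^ 2) s := by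
    intro s
    have h1 := f_line_hasDerivAt f hf x v s
    have h2 : HasDerivAt (fun s : ℝ => s * ⟪gradient f x, v⟫) ⟪gradient f x, v⟫ s := by
      simpa using (hasDerivAt_id s).mul_const ⟪gradient f x, v⟫
    have h3 : HasDerivAt (fun s : ℝ => C₁ * s ^ 2 / 2 * ‖v‖ ^ 2) (C₁ * s * ‖v‖ ^ 2) s := by
      have := (((hasDerivAt_id s).pow 2).const_mul C₁).div_const 2
      have h4 := this.mul_const (‖v‖ ^ 2)
      refine h4.congr_deriv ?_
      simp only [id_eq, pow_one]
      push_cast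
      ring
    exact (h1.sub h2).sub h3
  have hmono : MonotoneOn ψ (Set.Ici (0:ℝ)) := by
    apply monotoneOn_of_deriv_nonneg (convex_Ici 0)
      (fun s _ => (hd s).differentiableAt.continuousAt.continuousWithinAt)
      (fun s _ => (hd s).differentiableAt.differentiableWithinAt)
    intro s hs
    rw [interior_Ici] at hs
    rw [(hd s).deriv]
    have hm := strong_mono f hf C₁ hb x (s • v)
    have hsv : ‖s • v‖ ^ 2 = s ^ 2 * ‖v‖ ^ 2 := by
      rw [norm_smul, mul_pow, Real.norm_eq_abs, sq_abs]
    rw [inner_smul_right, hsv] at hm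
    have hs' : (0:ℝ) < s := hs
    have : ⟪gradient f (x + s • v) - gradient f x, v⟫ ≥ C₁ * s * ‖v‖ ^ 2 := by
      nlinarith [hm]
    rw [inner_sub_left] at this
    linarith
  have h01 := hmono (Set.self_mem_Ici) (Set.mem_Ici.2 (le_of_lt one_pos)) (le_of_lt one_pos)
  simp only [hψ, zero_smul, add_zero, one_smul, zero_mul, sub_zero, mul_zero, zero_pow,
    one_mul, one_pow, mul_one, zero_div] at h01
  linarith

lemma grad_injective (f : E → ℝ) (hf : ContDiff ℝ 2 f) (C₁ : ℝ) (hC₁ : 0 < C₁)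
    (hb : ∀ ξ η : E, C₁ * ‖η‖ ^ 2 ≤ ⟪fderiv ℝ (gradient f) ξ η, η⟫) :
    Function.Injective (gradient f) := by
  intro a b hab
  have h := strong_mono f hf C₁ hb b (a - b)
  rw [add_sub_cancel, hab, sub_self] at h
  simp only [inner_zero_left] at h
  have : ‖a - b‖ ^ 2 ≤ 0 := by nlinarith
  have : ‖a - b‖ = 0 := by nlinarith [norm_nonneg (a - b)]
  exact sub_eq_zero.mp (norm_eq_zero.mp this)

lemma grad_surjective (f : E → ℝ) (hf : ContDiff ℝ 2 f) (C₁ : ℝ) (hC₁ : 0 < C₁)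
    (hb : ∀ ξ η : E, C₁ * ‖η‖ ^ 2 ≤ ⟪fderiv ℝ (gradient f) ξ η, η⟫) :
    Function.Surjective (gradient f) := by
  intro y
  set c : ℝ := ‖gradient f 0‖ + ‖y‖ with hc
  set k : E → ℝ := fun x => f x - ⟪y, x⟫ with hk
  have hkd : ∀ x, HasFDerivAt k ((toDual ℝ E (gradient f x) : E →L[ℝ] ℝ) - innerSL ℝ y) x :=
    fun x => (f_hasGradientAt f hf x).hasFDerivAt.sub ((innerSL ℝ y).hasFDerivAt)
  have hcoer : ∀ x : E, f 0 - c * ‖x‖ + C₁ / 2 * ‖x‖ ^ 2 ≤ k x := by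
    intro x
    have h1 := lower_bound f hf C₁ hb 0 x
    rw [zero_add] at h1
    have h2 : -(‖gradient f 0‖ * ‖x‖) ≤ ⟪gradient f 0, x⟫ :=
      neg_le_of_abs_le (abs_real_inner_le_norm _ _)
    have h3 : ⟪y, x⟫ ≤ ‖y‖ * ‖x‖ := real_inner_le_norm _ _
    simp only [hk, hc]
    nlinarith
  have hφ : Filter.Tendsto (fun r : ℝ => f 0 - c * r + C₁ / 2 * r ^ 2) Filter.atTop
      Filter.atTop := by
    have h1 : Filter.Tendsto (fun r : ℝ => C₁ / 2 * r - c) Filter.atTop Filter.atTop :=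
      (Filter.tendsto_id.const_mul_atTop (by linarith)).atTop_add tendsto_const_nhds
    have h2 : Filter.Tendsto (fun r : ℝ => (C₁ / 2 * r - c) * r) Filter.atTop Filter.atTop :=
      h1.atTop_mul_atTop₀ Filter.tendsto_id
    have h3 := h2.atTop_add (tendsto_const_nhds (x := f 0))
    apply h3.congr'
    filter_upwards with r
    ring
  have htendsto : Filter.Tendsto k (Filter.cocompact E) Filter.atTop :=
    Filter.tendsto_atTop_mono hcoer (hφ.comp tendsto_norm_cocompact_atTop)
  have hkc : Continuous k := (hf.continuous).sub (innerSL ℝ y).continuous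
  obtain ⟨x₀, hx₀⟩ := hkc.exists_forall_le htendsto
  have hmin : IsLocalMin k x₀ := Filter.Eventually.of_forall hx₀
  have h0 : ((toDual ℝ E (gradient f x₀) : E →L[ℝ] ℝ) - innerSL ℝ y) = 0 := by
    rw [← (hkd x₀).fderiv]
    exact hmin.fderiv_eq_zero
  refine ⟨x₀, ?_⟩
  apply ext_inner_right ℝ
  intro v
  have := congrFun (congrArg (fun L : E →L[ℝ] ℝ => (L : E → ℝ)) h0) v
  simpa using sub_eq_zero.mp (by simpa using this)

lemma snd_symm (f : E → ℝ) (hf : ContDiff ℝ 2 f) (x u w : E) :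
    ⟪fderiv ℝ (gradient f) x u, w⟫ = ⟪fderiv ℝ (gradient f) x w, u⟫ := by
  have hsym : IsSymmSndFDerivAt ℝ f x := hf.contDiffAt.isSymmSndFDerivAt (by simp)
  have hA : HasFDerivAt (gradient f) (fderiv ℝ (gradient f) x) x :=
    ((grad_contDiff f hf).differentiable one_ne_zero x).hasFDerivAt
  have hcomp : HasFDerivAt (fderiv ℝ f) ((innerSL ℝ).comp (fderiv ℝ (gradient f) x)) x := by
    have h1 : HasFDerivAt (fun z => (innerSL ℝ) (gradient f z))
        ((innerSL ℝ).comp (fderiv ℝ (gradient f) x)) x := (innerSL ℝ).hasFDerivAt.comp x hA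
    apply h1.congr_of_eventuallyEq
    filter_upwards with z
    have := (f_hasGradientAt f hf z).hasFDerivAt.fderiv
    rw [this]
    ext v
    simp
  have hT : fderiv ℝ (fderiv ℝ f) x = (innerSL ℝ).comp (fderiv ℝ (gradient f) x) :=
    hcomp.fderiv
  have h1 := hsym u w
  rw [hT] at h1
  simpa using h1

lemma cauchy_schwarz_A (f : E → ℝ) (C₁ : ℝ) (hC₁ : 0 < C₁) (x : E)
    (hb : ∀ η : E, C₁ * ‖η‖ ^ 2 ≤ ⟪fderiv ℝ (gradient f) x η, η⟫)
    (hsym : ∀ u w : E, ⟪fderiv ℝ (gradient f) x u, w⟫ = ⟪fderiv ℝ (gradient f) x w, u⟫)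
    (ζ w : E) :
    ⟪fderiv ℝ (gradient f) x ζ, w⟫ ^ 2
      ≤ ⟪fderiv ℝ (gradient f) x ζ, ζ⟫ * ⟪fderiv ℝ (gradient f) x w, w⟫ := by
  set A := fderiv ℝ (gradient f) x with hA
  have hpsd : ∀ u : E, 0 ≤ ⟪A u, u⟫ := fun u =>
    le_trans (by positivity) (hb u)
  have hquad : ∀ t : ℝ, 0 ≤ ⟪A w, w⟫ * (t * t) + (2 * ⟪A ζ, w⟫) * t + ⟪A ζ, ζ⟫ := by
    intro t
    have h0 := hpsd (t • w + ζ)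
    have hexp : A (t • w + ζ) = t • A w + A ζ := by
      rw [map_add, _root_.map_smul]
    rw [hexp] at h0
    simp only [inner_add_left, inner_add_right, real_inner_smul_left, real_inner_smul_right]
      at h0
    have hsw : ⟪A w, ζ⟫ = ⟪A ζ, w⟫ := hsym w ζ
    rw [hsw] at h0
    nlinarith [h0]
  have hd := discrim_le_zero hquad
  rw [discrim] at hd
  nlinarith [hd]

theorem key (f : E → ℝ) (C₁ C₂ : ℝ) (hC₁ : 0 < C₁) (hC₂ : 0 < C₂) (hf : ContDiff ℝ 2 f)
    (hb : ∀ ξ η : E, C₁ * ‖η‖ ^ 2 ≤ ⟪fderiv ℝ (gradient f) ξ η, η⟫ ∧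
      ⟪fderiv ℝ (gradient f) ξ η, η⟫ ≤ C₂ * ‖η‖ ^ 2) :
    ContDiff ℝ 2 (fun ξ : E => ⨆ η, (⟪ξ, η⟫ - f η)) ∧
    (∀ ξs η : E,
      C₂⁻¹ * ‖η‖ ^ 2 ≤ ⟪fderiv ℝ (gradient fun ξ : E => ⨆ η', (⟪ξ, η'⟫ - f η')) ξs η, η⟫ ∧
      ⟪fderiv ℝ (gradient fun ξ : E => ⨆ η', (⟪ξ, η'⟫ - f η')) ξs η, η⟫ ≤ C₁⁻¹ * ‖η‖ ^ 2) ∧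
    ∀ ξ : E,
      ((fderiv ℝ (gradient fun ξ' : E => ⨆ η', (⟪ξ', η'⟫ - f η')) (gradient f ξ)).comp
        (fderiv ℝ (gradient f) ξ) = ContinuousLinearMap.id ℝ E) ∧
      ((fderiv ℝ (gradient f) ξ).comp
        (fderiv ℝ (gradient fun ξ' : E => ⨆ η', (⟪ξ', η'⟫ - f η')) (gradient f ξ)) =
        ContinuousLinearMap.id ℝ E) := by
  have hbl : ∀ ξ η : E, C₁ * ‖η‖ ^ 2 ≤ ⟪fderiv ℝ (gradient f) ξ η, η⟫ := fun ξ η => (hb ξ η).1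
  have hbu : ∀ ξ η : E, ⟪fderiv ℝ (gradient f) ξ η, η⟫ ≤ C₂ * ‖η‖ ^ 2 := fun ξ η => (hb ξ η).2
  have hinj := grad_injective f hf C₁ hC₁ hbl
  have hsurj := grad_surjective f hf C₁ hC₁ hbl
  set G : E → E := Function.surjInv hsurj with hGdef
  have hG : ∀ y, gradient f (G y) = y := fun y => Function.surjInv_eq hsurj y
  have hGg : ∀ x, G (gradient f x) = x := fun x => hinj (hG (gradient f x))
  -- invertibility of the Hessian
  have hA : ∀ x : E, ∃ e : E ≃L[ℝ] E, (e : E →L[ℝ] E) = fderiv ℝ (gradient f) x := by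
    intro x
    have hAinj : Function.Injective (fderiv ℝ (gradient f) x) := by
      intro u v huv
      have h1 := hbl x (u - v)
      rw [map_sub, huv, sub_self] at h1
      simp only [inner_zero_left] at h1
      have : ‖u - v‖ ^ 2 ≤ 0 := by nlinarith
      have : ‖u - v‖ = 0 := by nlinarith [norm_nonneg (u - v)]
      exact sub_eq_zero.mp (norm_eq_zero.mp this)
    have hbij : Function.Bijective (fderiv ℝ (gradient f) x).toLinearMap :=
      ⟨hAinj, LinearMap.injective_iff_surjective.mp hAinj⟩
    exact ⟨(LinearEquiv.ofBijective _ hbij).toContinuousLinearEquiv, by ext v; rfl⟩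
  choose e he using hA
  have hstrict : ∀ x : E, HasStrictFDerivAt (gradient f) ((e x : E →L[ℝ] E)) x := by
    intro x
    rw [he x]
    exact ((grad_contDiff f hf).contDiffAt).hasStrictFDerivAt one_ne_zero
  have hGd : ∀ x : E, HasStrictFDerivAt G ((e x).symm : E →L[ℝ] E) (gradient f x) :=
    fun x => (hstrict x).to_local_left_inverse (Filter.Eventually.of_forall hGg)
  have hGdy : ∀ y : E, HasFDerivAt G ((e (G y)).symm : E →L[ℝ] E) y := by
    intro y
    have h := (hGd (G y)).hasFDerivAt
    rwa [hG y] at h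
  have hfderivG : ∀ y, fderiv ℝ G y = ((e (G y)).symm : E →L[ℝ] E) :=
    fun y => (hGdy y).fderiv
  have hGcont1 : ContDiff ℝ 1 G := by
    rw [contDiff_iff_contDiffAt]
    intro y
    have hca : ContDiffAt ℝ 1 (gradient f) (G y) := (grad_contDiff f hf).contDiffAt
    have hfd : HasFDerivAt (gradient f) ((e (G y) : E →L[ℝ] E)) (G y) :=
      (hstrict (G y)).hasFDerivAt
    have hcinv := hca.to_localInverse (f' := e (G y)) hfd one_ne_zero
    rw [hG y] at hcinv
    apply hcinv.congr_of_eventuallyEq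
    have hev := (hca.hasStrictFDerivAt' hfd one_ne_zero).eventually_right_inverse
    rw [hG y] at hev
    filter_upwards [hev] with z hz
    exact hinj ((hG z).trans hz.symm)
  -- closed form of the conjugate
  have hFval : ∀ ξ : E, (⨆ η, (⟪ξ, η⟫ - f η)) = ⟪ξ, G ξ⟫ - f (G ξ) := by
    intro ξ
    have hle : ∀ η : E, ⟪ξ, η⟫ - f η ≤ ⟪ξ, G ξ⟫ - f (G ξ) := by
      intro η
      have h1 := lower_bound f hf C₁ hbl (G ξ) (η - G ξ)
      rw [add_sub_cancel, hG ξ, inner_sub_right] at h1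
      nlinarith [sq_nonneg ‖η - G ξ‖]
    have hbdd : BddAbove (Set.range fun η : E => ⟪ξ, η⟫ - f η) := by
      refine ⟨⟪ξ, G ξ⟫ - f (G ξ), ?_⟩
      rintro y ⟨η, rfl⟩
      exact hle η
    exact le_antisymm (ciSup_le hle) (le_ciSup hbdd (G ξ))
  have hFeq : (fun ξ : E => ⨆ η', (⟪ξ, η'⟫ - f η'))
      = fun ζ : E => ⟪ζ, G ζ⟫ - f (G ζ) := funext hFval
  -- derivative of the conjugate
  have hFd : ∀ ξ : E, HasFDerivAt (fun ζ : E => ⟪ζ, G ζ⟫ - f (G ζ))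
      (toDual ℝ E (G ξ) : E →L[ℝ] ℝ) ξ := by
    intro ξ
    have hB := hGdy ξ
    have h1 : HasFDerivAt (fun ζ : E => ⟪ζ, G ζ⟫)
        ((fderivInnerCLM ℝ (ξ, G ξ)).comp
          ((ContinuousLinearMap.id ℝ E).prod ((e (G ξ)).symm : E →L[ℝ] E))) ξ :=
      (hasFDerivAt_id ξ).inner ℝ hB
    have h2 : HasFDerivAt (fun ζ : E => f (G ζ))
        ((toDual ℝ E (gradient f (G ξ)) : E →L[ℝ] ℝ).comp ((e (G ξ)).symm : E →L[ℝ] E)) ξ :=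
      (f_hasGradientAt f hf (G ξ)).hasFDerivAt.comp ξ hB
    have h3 := h1.sub h2
    refine h3.congr_fderiv ?_
    ext v
    simp only [ContinuousLinearMap.coe_sub', Pi.sub_apply, ContinuousLinearMap.coe_comp',
      Function.comp_apply, ContinuousLinearMap.prod_apply, ContinuousLinearMap.coe_id',
      id_eq, fderivInnerCLM_apply, toDual_apply_apply, hG ξ]
    rw [real_inner_comm (G ξ) v]
    ring
  have hFgrad : gradient (fun ξ : E => ⨆ η', (⟪ξ, η'⟫ - f η')) = G := by
    rw [hFeq]
    exact funext fun ξ => (hasGradientAt_iff_hasFDerivAt.mpr (hFd ξ) :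
      HasGradientAt _ (G ξ) ξ).gradient
  refine ⟨?_, ?_, ?_⟩
  · -- C²
    rw [show (fun ξ : E => ⨆ η, (⟪ξ, η⟫ - f η)) = fun ζ : E => ⟪ζ, G ζ⟫ - f (G ζ) from
      funext hFval]
    rw [show (2 : WithTop ℕ∞) = 1 + 1 by norm_num, contDiff_succ_iff_fderiv]
    refine ⟨fun ξ => (hFd ξ).differentiableAt, by simp, ?_⟩
    rw [show fderiv ℝ (fun ζ : E => ⟪ζ, G ζ⟫ - f (G ζ))
        = fun ξ => (toDual ℝ E (G ξ) : E →L[ℝ] ℝ) from funext fun ξ => (hFd ξ).fderiv]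
    exact (toDual ℝ E).contDiff.comp hGcont1
  · -- Hessian bounds
    intro ξs η
    have hfdF : fderiv ℝ (gradient fun ξ : E => ⨆ η', (⟪ξ, η'⟫ - f η')) ξs
        = ((e (G ξs)).symm : E →L[ℝ] E) := by rw [hFgrad]; exact hfderivG ξs
    rw [hfdF]
    set x := G ξs with hx
    set ζ : E := (e x).symm η with hζ
    have hAζ : fderiv ℝ (gradient f) x ζ = η := by
      rw [← he x]; exact (e x).apply_symm_apply η
    have hBη : ((e x).symm : E →L[ℝ] E) η = ζ := rfl
    rw [hBη]
    have hQ : ⟪fderiv ℝ (gradient f) x ζ, ζ⟫ = ⟪ζ, η⟫ := by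
      rw [hAζ]; exact real_inner_comm ζ η
    constructor
    · -- lower bound
      rcases eq_or_ne η 0 with rfl | hη
      · simp
      have hηn : 0 < ‖η‖ := norm_pos_iff.mpr hη
      have hcs := cauchy_schwarz_A f C₁ hC₁ x (hbl x) (snd_symm f hf x) ζ η
      rw [hAζ, real_inner_self_eq_norm_sq, real_inner_comm ζ η] at hcs
      have hup := hbu x η
      have hpos : (0:ℝ) ≤ ⟪ζ, η⟫ := by
        rw [← hQ]; exact le_trans (by positivity) (hbl x ζ)
      have h2 : ‖η‖ ^ 2 ≤ C₂ * ⟪ζ, η⟫ := by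
        nlinarith [hcs, hup, hpos, mul_pos hηn hηn,
          mul_le_mul_of_nonneg_left hup hpos]
      calc C₂⁻¹ * ‖η‖ ^ 2 ≤ C₂⁻¹ * (C₂ * ⟪ζ, η⟫) :=
            mul_le_mul_of_nonneg_left h2 (le_of_lt (inv_pos.2 hC₂))
        _ = ⟪ζ, η⟫ := by field_simp
    · -- upper bound
      have hlow := hbl x ζ
      rw [hQ] at hlow
      have hcs2 : ⟪ζ, η⟫ ≤ ‖ζ‖ * ‖η‖ := real_inner_le_norm ζ η
      rw [inv_mul_eq_div, le_div_iff₀ hC₁]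
      rcases eq_or_lt_of_le (norm_nonneg ζ) with h0 | h0
      · have hz0 : ζ = 0 := norm_eq_zero.mp h0.symm
        rw [hz0, inner_zero_left]
        simpa using sq_nonneg ‖η‖
      · have hC₁a : C₁ * ‖ζ‖ ≤ ‖η‖ := by nlinarith
        nlinarith [mul_le_mul_of_nonneg_right hC₁a (norm_nonneg η),
          mul_le_mul_of_nonneg_left hcs2 (le_of_lt hC₁)]
  · -- composition identities
    intro ξ
    have hfdF : fderiv ℝ (gradient fun ξ' : E => ⨆ η', (⟪ξ', η'⟫ - f η')) (gradient f ξ)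
        = ((e ξ).symm : E →L[ℝ] E) := by
      rw [hFgrad]
      rw [hfderivG (gradient f ξ), hGg ξ]
    rw [hfdF, ← he ξ]
    constructor
    · ext v; simp
    · ext v; simp

end KeySection

/-- Let `H : [0,τ] × ℝ^{2n} → ℝ` be measurable in `t`, `C²` in `ξ` for
a.e. `t`, with `C₁|η|² ≤ (H''_t(ξ)η, η) ≤ C₂|η|²` for constants `0 < C₁ < C₂`.  Then for
a.e. `t` the Fenchel conjugate `H*_t(ξ) = sup_η (⟨ξ,η⟩ − H(t,η))` is twice (continuously)
differentiable, its Hessian satisfies `C₂⁻¹|η|² ≤ ((H*_t)''(ξ*)η, η) ≤ C₁⁻¹|η|²` for all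
`ξ*`, `η`, and at `ξ* = ∇H_t(ξ)` one has `(H*_t)''(ξ*) = (H''_t(ξ))⁻¹`
(the compositions of the two Hessians in both orders are the identity). -/
theorem statement5
    (n : ℕ) (τ : ℝ) (hτ : 0 < τ)
    (H : ℝ → EuclideanSpace ℝ (Fin (2 * n)) → ℝ)
    (hmeas : ∀ ξ, Measurable fun t => H t ξ)
    (C₁ C₂ : ℝ) (hC₁ : 0 < C₁) (hC : C₁ < C₂)
    (hH : ∀ᵐ t ∂(volume.restrict (Set.Icc 0 τ)),
      ContDiff ℝ 2 (H t) ∧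
      ∀ ξ η : EuclideanSpace ℝ (Fin (2 * n)),
        C₁ * ‖η‖ ^ 2 ≤ (inner ℝ ((fderiv ℝ (gradient (H t)) ξ) η) η : ℝ) ∧
        (inner ℝ ((fderiv ℝ (gradient (H t)) ξ) η) η : ℝ) ≤ C₂ * ‖η‖ ^ 2) :
    ∀ᵐ t ∂(volume.restrict (Set.Icc 0 τ)),
      ContDiff ℝ 2 (fun ξ : EuclideanSpace ℝ (Fin (2 * n)) =>
        ⨆ η, ((inner ℝ ξ η : ℝ) - H t η)) ∧
      (∀ ξs η : EuclideanSpace ℝ (Fin (2 * n)),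
        C₂⁻¹ * ‖η‖ ^ 2 ≤
          (inner ℝ ((fderiv ℝ (gradient fun ξ : EuclideanSpace ℝ (Fin (2 * n)) =>
            ⨆ η', ((inner ℝ ξ η' : ℝ) - H t η')) ξs) η) η : ℝ) ∧
        (inner ℝ ((fderiv ℝ (gradient fun ξ : EuclideanSpace ℝ (Fin (2 * n)) =>
            ⨆ η', ((inner ℝ ξ η' : ℝ) - H t η')) ξs) η) η : ℝ) ≤ C₁⁻¹ * ‖η‖ ^ 2) ∧
      ∀ ξ : EuclideanSpace ℝ (Fin (2 * n)),
        ((fderiv ℝ (gradient fun ξ' : EuclideanSpace ℝ (Fin (2 * n)) =>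
            ⨆ η', ((inner ℝ ξ' η' : ℝ) - H t η')) (gradient (H t) ξ)).comp
          (fderiv ℝ (gradient (H t)) ξ) = ContinuousLinearMap.id ℝ _) ∧
        ((fderiv ℝ (gradient (H t)) ξ).comp
          (fderiv ℝ (gradient fun ξ' : EuclideanSpace ℝ (Fin (2 * n)) =>
            ⨆ η', ((inner ℝ ξ' η' : ℝ) - H t η')) (gradient (H t) ξ)) =
          ContinuousLinearMap.id ℝ _) := by
  filter_upwards [hH] with t ht
  exact key (H t) C₁ C₂ hC₁ (lt_trans hC₁ hC) ht.1 ht.2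
end

section
/- Let A ∈ L_s(ℝ^{2n}) be a positive definite symmetric matrix and M ∈ Sp(2n,ℝ). Then the set Γ(A) = {t ∈ ℝ \ {0} : dim Ker(exp(tA) − M) > 0} is a discrete subset of ℝ. -/
open Matrix Filter Set

/-- Let `A` be a positive definite symmetric real `2n×2n` matrix and
`M ∈ Sp(2n,ℝ)`.  Then `Γ(A) = {t ∈ ℝ \ {0} : dim Ker(exp(tA) − M) > 0}` is a discrete
subset of `ℝ`, i.e. it has no accumulation point in `ℝ`.  (Here `dim Ker(exp(tA) − M) > 0`
is expressed by `det(exp(tA) − M) = 0`.) -/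
theorem statement10
    (n : ℕ) (A : Matrix (Fin n ⊕ Fin n) (Fin n ⊕ Fin n) ℝ)
    (hA : A.PosDef)
    (M : Matrix (Fin n ⊕ Fin n) (Fin n ⊕ Fin n) ℝ)
    (hM : M ∈ Matrix.symplecticGroup (Fin n) ℝ) :
    ∀ x : ℝ, ¬ AccPt x (Filter.principal
      {t : ℝ | t ≠ 0 ∧ (NormedSpace.exp (t • A) - M).det = 0}) := by
  intro x hx
  have hH : A.IsHermitian := hA.1
  set U : Matrix (Fin n ⊕ Fin n) (Fin n ⊕ Fin n) ℝ :=
    (hH.eigenvectorUnitary : Matrix (Fin n ⊕ Fin n) (Fin n ⊕ Fin n) ℝ) with hUdef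
  have hUstar : star U * U = 1 := Matrix.mem_unitaryGroup_iff'.mp hH.eigenvectorUnitary.2
  have hUstar' : U * star U = 1 := Matrix.mem_unitaryGroup_iff.mp hH.eigenvectorUnitary.2
  have hUunit : IsUnit U := ⟨⟨U, star U, hUstar', hUstar⟩, rfl⟩
  have hUinv : U⁻¹ = star U := Matrix.inv_eq_left_inv hUstar
  set lam : Fin n ⊕ Fin n → ℝ := hH.eigenvalues with hlam
  set N : Matrix (Fin n ⊕ Fin n) (Fin n ⊕ Fin n) ℝ := U⁻¹ * M * U with hN
  set g : ℝ → ℝ :=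
    fun t => (Matrix.diagonal (fun i => Real.exp (t * lam i)) - N).det with hg
  -- key identity
  have key : ∀ t : ℝ, (NormedSpace.exp (t • A) - M).det = g t := by
    intro t
    have hAe : t • A = U * Matrix.diagonal (fun i => t * lam i) * U⁻¹ := by
      rw [hUinv]
      conv_lhs => rw [hH.spectral_theorem]
      rw [Unitary.conjStarAlgAut_apply]
      rw [← smul_mul_assoc, ← mul_smul_comm, ← Matrix.diagonal_smul]
      have hfun : (t • (RCLike.ofReal ∘ hH.eigenvalues) : (Fin n ⊕ Fin n) → ℝ)
          = fun i => t * lam i := by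
        funext i
        simp [smul_eq_mul, hlam]
      rw [hfun]
    have hexp : NormedSpace.exp (t • A)
        = U * Matrix.diagonal (fun i => Real.exp (t * lam i)) * U⁻¹ := by
      rw [hAe, Matrix.exp_conj U _ hUunit, Matrix.exp_diagonal]
      congr 2
      funext i
      rw [Pi.exp_def, Real.exp_eq_exp_ℝ]
    have hMeq : M = U * N * U⁻¹ := by
      rw [hN, hUinv]
      rw [← Matrix.mul_assoc, ← Matrix.mul_assoc, hUstar', Matrix.one_mul,
        Matrix.mul_assoc, hUstar', Matrix.mul_one]
    calc (NormedSpace.exp (t • A) - M).det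
        = (U * (Matrix.diagonal (fun i => Real.exp (t * lam i)) - N) * U⁻¹).det := by
          rw [hexp]
          congr 1
          conv_lhs => rw [hMeq]
          rw [Matrix.mul_sub, Matrix.sub_mul]
      _ = g t := by rw [Matrix.det_conj hUunit]
  -- g is analytic on ℝ
  have hganal : AnalyticOnNhd ℝ g Set.univ := by
    intro z _
    have hentry : ∀ i j : Fin n ⊕ Fin n,
        AnalyticAt ℝ (fun t : ℝ =>
          (Matrix.diagonal (fun k => Real.exp (t * lam k)) - N) i j) z := by
      intro i j
      by_cases h : i = j
      · subst h
        simp only [Matrix.sub_apply, Matrix.diagonal_apply_eq]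
        exact ((analyticAt_id.mul analyticAt_const).rexp).sub analyticAt_const
      · simp only [Matrix.sub_apply, Matrix.diagonal_apply_ne _ h]
        exact analyticAt_const.sub analyticAt_const
    have : AnalyticAt ℝ (fun t : ℝ => ∑ σ : Equiv.Perm (Fin n ⊕ Fin n),
        (Equiv.Perm.sign σ : ℝ) *
          ∏ i, (Matrix.diagonal (fun k => Real.exp (t * lam k)) - N) (σ i) i) z := by
      refine Finset.analyticAt_fun_sum _ fun σ _ => ?_
      exact analyticAt_const.mul (Finset.analyticAt_fun_prod _ fun i _ => hentry (σ i) i)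
    simpa only [hg, Matrix.det_apply'] using this
  -- g vanishes near x frequently, hence everywhere
  rw [accPt_iff_frequently] at hx
  have hfreq : ∃ᶠ t in nhdsWithin x {x}ᶜ, g t = 0 := by
    rw [frequently_nhdsWithin_iff]
    refine hx.mono fun y hy => ⟨?_, hy.1⟩
    rw [← key y]
    exact hy.2.2
  have hzero : Set.EqOn g 0 Set.univ :=
    hganal.eqOn_zero_of_preconnected_of_frequently_eq_zero isPreconnected_univ
      (Set.mem_univ x) hfreq
  -- but g tends to det (0 - N) ≠ 0 at -∞
  have hdiag : Tendsto (fun t : ℝ =>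
      Matrix.diagonal (fun i => Real.exp (t * lam i))) atBot
      (nhds (0 : Matrix (Fin n ⊕ Fin n) (Fin n ⊕ Fin n) ℝ)) := by
    refine tendsto_pi_nhds.2 ?_
    intro i
    rw [tendsto_pi_nhds]
    intro j
    by_cases h : i = j
    · subst h
      simp only [Matrix.diagonal_apply_eq, Matrix.zero_apply]
      exact Real.tendsto_exp_atBot.comp (Filter.tendsto_id.atBot_mul_const (hA.eigenvalues_pos i))
    · simp only [Matrix.diagonal_apply_ne _ h, Matrix.zero_apply]
      exact tendsto_const_nhds
  have hlim : Tendsto g atBot (nhds ((0 - N).det)) := by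
    have hF : Tendsto (fun t : ℝ =>
        Matrix.diagonal (fun i => Real.exp (t * lam i)) - N) atBot (nhds (0 - N)) :=
      hdiag.sub tendsto_const_nhds
    exact ((Continuous.matrix_det continuous_id).tendsto (0 - N)).comp hF
  have hg0 : g = fun _ => (0 : ℝ) := funext fun t => hzero (Set.mem_univ t)
  have hlim0 : Tendsto g atBot (nhds (0 : ℝ)) := by rw [hg0]; exact tendsto_const_nhds
  have hdet0 : (0 - N).det = 0 := tendsto_nhds_unique hlim hlim0
  -- compute det (0 - N) = det M ≠ 0
  have hdetM : M.det ≠ 0 := (SymplecticGroup.symplectic_det hM).ne_zero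
  have hdetN : N.det = M.det := Matrix.det_conj' hUunit M
  have : (0 - N).det = N.det := by
    rw [zero_sub, Matrix.det_neg]
    have hcard : Fintype.card (Fin n ⊕ Fin n) = n + n := by simp
    rw [hcard]
    have : (-1 : ℝ) ^ (n + n) = 1 := by
      rw [← two_mul, pow_mul]
      norm_num
    rw [this, one_mul]
  rw [this, hdetN] at hdet0
  exact hdetM hdet0
end

section
/- Let M ∈ Sp(2n,ℝ), A ∈ L^∞([0,τ]; L_s(ℝ^{2n})), γ_A the fundamental solution of ẋ = JA(t)x, and suppose det(γ_A(τ) − M) ≠ 0. Then the operator Λ_{M,τ,A} : W^{1,2}_M([0,τ];ℝ^{2n}) → L²([0,τ];ℝ^{2n}), u ↦ Ju̇ + Au, is a Banach space isomorphism. -/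
open MeasureTheory intervalIntegral

set_option maxHeartbeats 4000000

lemma mulVec_norm_le' {ι : Type*} [Fintype ι] (B : Matrix ι ι ℝ) (v : ι → ℝ) {C : ℝ}
    (hC : 0 ≤ C) (h : ∀ i j, |B i j| ≤ C) :
    ‖B.mulVec v‖ ≤ (Fintype.card ι * C) * ‖v‖ := by
  rw [pi_norm_le_iff_of_nonneg (by positivity)]
  intro i
  calc ‖B.mulVec v i‖ = |∑ j, B i j * v j| := by
        simp [Matrix.mulVec, dotProduct, Real.norm_eq_abs]
    _ ≤ ∑ j, |B i j * v j| := Finset.abs_sum_le_sum_abs _ _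
    _ ≤ ∑ _j : ι, C * ‖v‖ := by
        refine Finset.sum_le_sum fun j _ => ?_
        rw [abs_mul]
        exact mul_le_mul (h i j) ((Real.norm_eq_abs _ ▸ norm_le_pi_norm v j)) (abs_nonneg _)
          hC
    _ = (Fintype.card ι * C) * ‖v‖ := by
        simp [Finset.sum_const, Finset.card_univ, mul_assoc]

lemma gronwall_zero {b C : ℝ} (hb : 0 ≤ b) (hC : 0 ≤ C) {φ : ℝ → ℝ}
    (hcont : ContinuousOn φ (Set.Icc 0 b)) (hnn : ∀ t ∈ Set.Icc (0:ℝ) b, 0 ≤ φ t)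
    (hle : ∀ t ∈ Set.Icc (0:ℝ) b, φ t ≤ C * ∫ s in (0:ℝ)..t, φ s) :
    ∀ t ∈ Set.Icc (0:ℝ) b, φ t = 0 := by
  obtain ⟨S, hS⟩ := isCompact_Icc.exists_bound_of_continuousOn hcont
  have hS' : ∀ t ∈ Set.Icc (0:ℝ) b, φ t ≤ S := fun t ht =>
    (le_abs_self _).trans (Real.norm_eq_abs (φ t) ▸ hS t ht)
  have hS0 : 0 ≤ S := le_trans (hnn 0 ⟨le_refl _, hb⟩) (hS' 0 ⟨le_refl _, hb⟩)
  have hint : ∀ t ∈ Set.Icc (0:ℝ) b, IntervalIntegrable φ volume 0 t := by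
    intro t ht
    apply ContinuousOn.intervalIntegrable
    apply hcont.mono
    rw [Set.uIcc_of_le ht.1]
    exact Set.Icc_subset_Icc le_rfl ht.2
  have key : ∀ k : ℕ, ∀ t ∈ Set.Icc (0:ℝ) b, φ t ≤ S * (C * t) ^ k / (Nat.factorial k) := by
    intro k
    induction k with
    | zero => intro t ht; simpa using hS' t ht
    | succ k ih =>
      intro t ht
      have h1 : φ t ≤ C * ∫ s in (0:ℝ)..t, φ s := hle t ht
      have h2 : (∫ s in (0:ℝ)..t, φ s) ≤ ∫ s in (0:ℝ)..t, S * C ^ k * s ^ k / (Nat.factorial k) := by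
        apply intervalIntegral.integral_mono_on ht.1 (hint t ht)
        · apply ContinuousOn.intervalIntegrable; fun_prop
        · intro x hx
          have := ih x ⟨hx.1, hx.2.trans ht.2⟩
          calc φ x ≤ S * (C * x) ^ k / (Nat.factorial k) := this
            _ = S * C ^ k * x ^ k / (Nat.factorial k) := by ring
      have h3 : (∫ s in (0:ℝ)..t, S * C ^ k * s ^ k / (Nat.factorial k))
          = S * C ^ k / (Nat.factorial k) * (t ^ (k+1) / (k+1)) := by
        rw [show (fun s : ℝ => S * C ^ k * s ^ k / (Nat.factorial k))
          = (fun s : ℝ => (S * C ^ k / (Nat.factorial k)) * s ^ k) by funext s; ring]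
        rw [intervalIntegral.integral_const_mul, integral_pow]
        ring
      calc φ t ≤ C * ∫ s in (0:ℝ)..t, φ s := h1
        _ ≤ C * (S * C ^ k / (Nat.factorial k) * (t ^ (k+1) / (k+1))) := by
            apply mul_le_mul_of_nonneg_left (h2.trans (le_of_eq h3)) hC
        _ = S * (C * t) ^ (k+1) / (Nat.factorial (k+1)) := by
            rw [Nat.factorial_succ]
            push_cast
            field_simp
            ring
  intro t ht
  have hlim : Filter.Tendsto (fun k : ℕ => S * (C * t) ^ k / (Nat.factorial k))
      Filter.atTop (nhds 0) := by
    have := (FloorSemiring.tendsto_pow_div_factorial_atTop (C * t)).const_mul S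
    simpa [mul_div_assoc] using this
  have : φ t ≤ 0 := ge_of_tendsto hlim (Filter.Eventually.of_forall fun k => key k t ht)
  exact le_antisymm this (hnn t ht)

lemma integrableOn_mulVec {ι : Type*} [Fintype ι] {b C D : ℝ} (hC : 0 ≤ C) (hD : 0 ≤ D)
    {B : ℝ → Matrix ι ι ℝ} (hBmeas : ∀ i j, Measurable fun s => B s i j)
    (hBbd : ∀ s ∈ Set.Icc (0:ℝ) b, ∀ i j, |B s i j| ≤ C)
    {x : ℝ → ι → ℝ} (hx : AEMeasurable x (volume.restrict (Set.Icc (0:ℝ) b)))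
    (hxbd : ∀ s ∈ Set.Icc (0:ℝ) b, ‖x s‖ ≤ D) :
    IntegrableOn (fun s => (B s).mulVec (x s)) (Set.Icc (0:ℝ) b) volume := by
  have hasm : AEStronglyMeasurable (fun s => (B s).mulVec (x s))
      (volume.restrict (Set.Icc (0:ℝ) b)) := by
    have hB' : AEMeasurable (fun s => (fun i j => B s i j : ι → ι → ℝ))
        (volume.restrict (Set.Icc (0:ℝ) b)) :=
      (measurable_pi_iff.2 fun i => measurable_pi_iff.2 fun j => hBmeas i j).aemeasurable
    have hpair := hB'.prodMk hx
    have hF : Continuous (fun p : (ι → ι → ℝ) × (ι → ℝ) => (fun i => ∑ j, p.1 i j * p.2 j : ι → ℝ)) := by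
      apply continuous_pi
      intro i
      apply continuous_finset_sum
      intro j _
      exact (((continuous_apply j).comp ((continuous_apply i).comp continuous_fst)).mul
        ((continuous_apply j).comp continuous_snd))
    have : (fun s => (B s).mulVec (x s)) = (fun p : (ι → ι → ℝ) × (ι → ℝ) =>
        (fun i => ∑ j, p.1 i j * p.2 j : ι → ℝ)) ∘ (fun s => ((fun i j => B s i j), x s)) := by
      funext s
      simp [Function.comp, Matrix.mulVec, dotProduct]
      rfl
    rw [this]
    exact ((hF.measurable.comp_aemeasurable hpair).aestronglyMeasurable)
  refine Integrable.mono' (g := fun _ => (Fintype.card ι * C) * D) ?_ hasm ?_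
  · have : volume (Set.Icc (0:ℝ) b) < ⊤ := by
      rw [Real.volume_Icc]; exact ENNReal.ofReal_lt_top
    exact integrableOn_const this.ne
  · rw [ae_restrict_iff' measurableSet_Icc]
    filter_upwards with s hs
    calc ‖(B s).mulVec (x s)‖ ≤ (Fintype.card ι * C) * ‖x s‖ :=
          mulVec_norm_le' _ _ hC (hBbd s hs)
      _ ≤ (Fintype.card ι * C) * D := by
          apply mul_le_mul_of_nonneg_left (hxbd s hs) (by positivity)

lemma II_of_integrableOn {ι : Type*} [Fintype ι] {f : ℝ → ι → ℝ} {b a c : ℝ}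
    (h : IntegrableOn f (Set.Icc (0:ℝ) b) volume)
    (ha : a ∈ Set.Icc (0:ℝ) b) (hc : c ∈ Set.Icc (0:ℝ) b) :
    IntervalIntegrable f volume a c := by
  rw [intervalIntegrable_iff]
  apply h.mono_set
  refine subset_trans Set.Ioc_subset_Icc_self ?_
  apply Set.Icc_subset_Icc
  · exact le_inf ha.1 hc.1
  · exact sup_le ha.2 hc.2

lemma solution_zero_forward {ι : Type*} [Fintype ι] {b C : ℝ} (hb : 0 ≤ b) (hC : 0 ≤ C)
    {B : ℝ → Matrix ι ι ℝ} (hBmeas : ∀ i j, Measurable fun s => B s i j)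
    (hBbd : ∀ s ∈ Set.Icc (0:ℝ) b, ∀ i j, |B s i j| ≤ C)
    {x : ℝ → ι → ℝ} (hx : ContinuousOn x (Set.Icc (0:ℝ) b))
    (heq : ∀ t ∈ Set.Icc (0:ℝ) b, x t = ∫ s in (0:ℝ)..t, (B s).mulVec (x s)) :
    ∀ t ∈ Set.Icc (0:ℝ) b, x t = 0 := by
  obtain ⟨D, hD⟩ := isCompact_Icc.exists_bound_of_continuousOn hx
  have hD0 : 0 ≤ D := le_trans (norm_nonneg _) (hD 0 ⟨le_refl _, hb⟩)
  have hIO : IntegrableOn (fun s => (B s).mulVec (x s)) (Set.Icc (0:ℝ) b) volume :=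
    integrableOn_mulVec hC hD0 hBmeas hBbd
      (hx.aemeasurable measurableSet_Icc) hD
  have key : ∀ t ∈ Set.Icc (0:ℝ) b, ‖x t‖ = 0 := by
    apply gronwall_zero hb (mul_nonneg (Nat.cast_nonneg _) hC) hx.norm
      (fun t _ => norm_nonneg _)
    intro t ht
    have h0t : (0:ℝ) ≤ t := ht.1
    calc ‖x t‖ = ‖∫ s in (0:ℝ)..t, (B s).mulVec (x s)‖ := by rw [← heq t ht]
      _ ≤ ∫ s in (0:ℝ)..t, ‖(B s).mulVec (x s)‖ :=
          intervalIntegral.norm_integral_le_integral_norm h0t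
      _ ≤ ∫ s in (0:ℝ)..t, (Fintype.card ι * C) * ‖x s‖ := by
          apply intervalIntegral.integral_mono_on h0t
          · exact (II_of_integrableOn hIO ⟨le_refl _, hb⟩ ht).norm
          · apply ContinuousOn.intervalIntegrable
            apply (continuousOn_const.mul (hx.norm.mono ?_))
            rw [Set.uIcc_of_le h0t]
            exact Set.Icc_subset_Icc le_rfl ht.2
          · intro s hs
            exact mulVec_norm_le' _ _ hC (hBbd s ⟨hs.1, hs.2.trans ht.2⟩)
      _ = (Fintype.card ι * C) * ∫ s in (0:ℝ)..t, ‖x s‖ :=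
          intervalIntegral.integral_const_mul _ _
  intro t ht
  exact norm_eq_zero.1 (key t ht)

lemma solution_zero_backward {ι : Type*} [Fintype ι] {b C : ℝ} (hb : 0 ≤ b) (hC : 0 ≤ C)
    {B : ℝ → Matrix ι ι ℝ} (hBmeas : ∀ i j, Measurable fun s => B s i j)
    (hBbd : ∀ s ∈ Set.Icc (0:ℝ) b, ∀ i j, |B s i j| ≤ C)
    {x : ℝ → ι → ℝ} (hx : ContinuousOn x (Set.Icc (0:ℝ) b))
    (heq : ∀ t ∈ Set.Icc (0:ℝ) b, x t = ∫ s in b..t, (B s).mulVec (x s)) :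
    ∀ t ∈ Set.Icc (0:ℝ) b, x t = 0 := by
  obtain ⟨D, hD⟩ := isCompact_Icc.exists_bound_of_continuousOn hx
  have hD0 : 0 ≤ D := le_trans (norm_nonneg _) (hD 0 ⟨le_refl _, hb⟩)
  have hIO : IntegrableOn (fun s => (B s).mulVec (x s)) (Set.Icc (0:ℝ) b) volume :=
    integrableOn_mulVec hC hD0 hBmeas hBbd (hx.aemeasurable measurableSet_Icc) hD
  have hmaps : ∀ r ∈ Set.Icc (0:ℝ) b, b - r ∈ Set.Icc (0:ℝ) b := by
    intro r hr; exact ⟨by linarith [hr.2], by linarith [hr.1]⟩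
  have key : ∀ r ∈ Set.Icc (0:ℝ) b, ‖x (b - r)‖ = 0 := by
    apply gronwall_zero hb (mul_nonneg (Nat.cast_nonneg _) hC)
    · apply hx.norm.comp (Continuous.continuousOn (by fun_prop)) hmaps
    · exact fun t _ => norm_nonneg _
    · intro r hr
      have hsub : b - r ∈ Set.Icc (0:ℝ) b := hmaps r hr
      calc ‖x (b - r)‖ = ‖∫ s in b..(b - r), (B s).mulVec (x s)‖ := by
            rw [← heq _ hsub]
        _ = ‖∫ s in (b - r)..b, (B s).mulVec (x s)‖ := by
            rw [intervalIntegral.integral_symm, norm_neg]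
        _ ≤ ∫ s in (b - r)..b, ‖(B s).mulVec (x s)‖ :=
            intervalIntegral.norm_integral_le_integral_norm (by linarith [hr.1])
        _ ≤ ∫ s in (b - r)..b, (Fintype.card ι * C) * ‖x s‖ := by
            apply intervalIntegral.integral_mono_on (by linarith [hr.1])
            · exact (II_of_integrableOn hIO hsub ⟨hb, le_refl _⟩).norm
            · apply ContinuousOn.intervalIntegrable
              apply continuousOn_const.mul (hx.norm.mono ?_)
              rw [Set.uIcc_of_le (by linarith [hr.1] : b - r ≤ b)]
              exact Set.Icc_subset_Icc hsub.1 le_rfl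
            · intro s hs
              exact mulVec_norm_le' _ _ hC (hBbd s ⟨le_trans hsub.1 hs.1, hs.2⟩)
        _ = (Fintype.card ι * C) * ∫ s in (b - r)..b, ‖x s‖ :=
            intervalIntegral.integral_const_mul _ _
        _ = (Fintype.card ι * C) * ∫ q in (0:ℝ)..r, ‖x (b - q)‖ := by
            congr 1
            rw [intervalIntegral.integral_comp_sub_left (fun s => ‖x s‖) b]
            norm_num
  intro t ht
  have := key (b - t) (hmaps t ht)
  rw [show b - (b - t) = t by ring] at this
  exact norm_eq_zero.1 this

lemma entry_mul_le {ι : Type*} [Fintype ι] (P Q : Matrix ι ι ℝ) {C₁ C₂ : ℝ}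
    (hC₁ : 0 ≤ C₁) (hC₂ : 0 ≤ C₂)
    (h₁ : ∀ i j, |P i j| ≤ C₁) (h₂ : ∀ i j, |Q i j| ≤ C₂) :
    ∀ i j, |(P * Q) i j| ≤ Fintype.card ι * (C₁ * C₂) := by
  intro i j
  rw [Matrix.mul_apply]
  calc |∑ k, P i k * Q k j| ≤ ∑ k, |P i k * Q k j| := Finset.abs_sum_le_sum_abs _ _
    _ ≤ ∑ _k : ι, C₁ * C₂ := by
        refine Finset.sum_le_sum fun k _ => ?_
        rw [abs_mul]
        exact mul_le_mul (h₁ i k) (h₂ k j) (abs_nonneg _) hC₁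
    _ = Fintype.card ι * (C₁ * C₂) := by simp [Finset.sum_const, Finset.card_univ]

lemma J_entry_le (n : ℕ) : ∀ i j, |Matrix.J (Fin n) ℝ i j| ≤ 1 := by
  intro i j
  rcases i with i | i <;> rcases j with j | j <;>
    simp [Matrix.J, Matrix.fromBlocks, Matrix.one_apply] <;>
    split_ifs <;> norm_num

lemma continuousOn_mulVec' {ι : Type*} [Fintype ι] {P : ℝ → Matrix ι ι ℝ} {y : ℝ → ι → ℝ}
    {s : Set ℝ} (hP : ∀ i j, ContinuousOn (fun t => P t i j) s) (hy : ContinuousOn y s) :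
    ContinuousOn (fun t => (P t).mulVec (y t)) s := by
  rw [continuousOn_pi]
  intro i
  have : (fun t => (P t).mulVec (y t) i) = fun t => ∑ j, P t i j * y t j := by
    funext t; simp [Matrix.mulVec, dotProduct]
  rw [this]
  exact continuousOn_finset_sum _ fun j _ =>
    (hP i j).mul ((continuous_apply j).comp_continuousOn hy)

lemma ae_ne_real (s : ℝ) : ∀ᵐ r : ℝ, r ≠ s := by
  rw [MeasureTheory.ae_iff]
  convert Real.volume_singleton (a := s) using 2
  ext x; simp

lemma ite_lt_eq_indicator {ι : Type*} [Fintype ι] (c : ℝ) (X : ℝ → ι → ℝ) :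
    (fun r => if r < c then X r else 0) = Set.indicator (Set.Iio c) X := by
  funext r
  by_cases h : r < c <;> simp [Set.indicator_apply, Set.mem_Iio, h]

lemma ite_gt_eq_indicator {ι : Type*} [Fintype ι] (c : ℝ) (X : ℝ → ι → ℝ) :
    (fun s => if c < s then X s else 0) = Set.indicator (Set.Ioi c) X := by
  funext r
  by_cases h : c < r <;> simp [Set.indicator_apply, Set.mem_Ioi, h]

lemma II_ite_lt {ι : Type*} [Fintype ι] {c : ℝ} {X : ℝ → ι → ℝ} {a b : ℝ}
    (hX : IntervalIntegrable X volume a b) :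
    IntervalIntegrable (fun r => if r < c then X r else 0) volume a b := by
  rw [intervalIntegrable_iff] at *
  rw [ite_lt_eq_indicator]
  exact hX.indicator measurableSet_Iio

lemma II_ite_gt {ι : Type*} [Fintype ι] {c : ℝ} {X : ℝ → ι → ℝ} {a b : ℝ}
    (hX : IntervalIntegrable X volume a b) :
    IntervalIntegrable (fun s => if c < s then X s else 0) volume a b := by
  rw [intervalIntegrable_iff] at *
  rw [ite_gt_eq_indicator]
  exact hX.indicator measurableSet_Ioi

lemma measurable_Ft {ι : Type*} [Fintype ι] {P : ℝ → Matrix ι ι ℝ} {g : ℝ → ι → ℝ}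
    (hP : ∀ i j, Measurable fun s => P s i j) (hg : Measurable g) :
    Measurable (fun p : ℝ × ℝ => if p.2 < p.1 then (P p.1).mulVec (g p.2) else 0) := by
  rw [measurable_pi_iff]
  intro i
  have : (fun p : ℝ × ℝ => (if p.2 < p.1 then (P p.1).mulVec (g p.2) else 0) i)
      = fun p : ℝ × ℝ => if p.2 < p.1 then ∑ k, P p.1 i k * g p.2 k else 0 := by
    funext p
    by_cases h : p.2 < p.1 <;> simp [h, Matrix.mulVec, dotProduct]
  rw [this]
  exact Measurable.ite (measurableSet_lt measurable_snd measurable_fst)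
    (Finset.measurable_sum _ fun k _ => ((hP i k).comp measurable_fst).mul
      (((measurable_pi_apply k).comp hg).comp measurable_snd)) measurable_const
/-- Let `M ∈ Sp(2n,ℝ)`, `A ∈ L^∞([0,τ]; L_s(ℝ^{2n}))`, `γ_A` the
fundamental solution of `ẋ = JA(t)x`, and suppose `det(γ_A(τ) − M) ≠ 0`.  Then
`Λ_{M,τ,A} : W^{1,2}_M([0,τ];ℝ^{2n}) → L²([0,τ];ℝ^{2n})`, `u ↦ Ju̇ + Au`, is a Banach
space isomorphism: for every `w ∈ L²` there is a solution `u` of `Ju̇ + Au = w` on `[0,τ]`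
(i.e. `u(t) = u(0) + ∫₀ᵗ (JA(s)u(s) − Jw(s)) ds`) with `u(τ) = Mu(0)`, unique on
`[0,τ]`. -/
theorem statement15
    (n : ℕ) (τ : ℝ) (hτ : 0 < τ)
    (M : Matrix (Fin n ⊕ Fin n) (Fin n ⊕ Fin n) ℝ)
    (hM : M ∈ Matrix.symplecticGroup (Fin n) ℝ)
    (A : ℝ → Matrix (Fin n ⊕ Fin n) (Fin n ⊕ Fin n) ℝ)
    (hAmeas : ∀ i j, Measurable fun t => A t i j)
    (hAsymm : ∀ t, (A t).IsSymm)
    (hAbdd : ∃ C : ℝ, ∀ t i j, |A t i j| ≤ C)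
    (γ : ℝ → Matrix (Fin n ⊕ Fin n) (Fin n ⊕ Fin n) ℝ)
    (hγcont : Continuous γ)
    (hγ : ∀ (ξ : (Fin n ⊕ Fin n) → ℝ) (t : ℝ),
      (γ t).mulVec ξ = ξ + ∫ s in (0:ℝ)..t, (Matrix.J (Fin n) ℝ * A s).mulVec ((γ s).mulVec ξ))
    (hdet : (γ τ - M).det ≠ 0) :
    ∀ w : ℝ → (Fin n ⊕ Fin n) → ℝ, Measurable w →
      MemLp w 2 (volume.restrict (Set.Icc 0 τ)) →
      ∃ u : ℝ → (Fin n ⊕ Fin n) → ℝ,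
        (ContinuousOn u (Set.Icc 0 τ) ∧
          (∀ t ∈ Set.Icc (0:ℝ) τ, u t = u 0 + ∫ s in (0:ℝ)..t,
            ((Matrix.J (Fin n) ℝ * A s).mulVec (u s) - (Matrix.J (Fin n) ℝ).mulVec (w s))) ∧
          u τ = M.mulVec (u 0)) ∧
        ∀ u' : ℝ → (Fin n ⊕ Fin n) → ℝ,
          (ContinuousOn u' (Set.Icc 0 τ) ∧
            (∀ t ∈ Set.Icc (0:ℝ) τ, u' t = u' 0 + ∫ s in (0:ℝ)..t,
              ((Matrix.J (Fin n) ℝ * A s).mulVec (u' s) - (Matrix.J (Fin n) ℝ).mulVec (w s))) ∧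
            u' τ = M.mulVec (u' 0)) →
          ∀ t ∈ Set.Icc (0:ℝ) τ, u' t = u t := by
  intro w hwmeas hwL2
  have hτ0 : (0:ℝ) ≤ τ := hτ.le
  set ιJ := Matrix.J (Fin n) ℝ with hιJ
  -- bound for A
  obtain ⟨C₀, hC₀⟩ := hAbdd
  set C := max C₀ 0 with hCdef
  have hC0 : 0 ≤ C := le_max_right _ _
  have hC : ∀ t i j, |A t i j| ≤ C := fun t i j => (hC₀ t i j).trans (le_max_left _ _)
  -- bound and measurability for J * A
  set N := (Fintype.card (Fin n ⊕ Fin n) : ℝ) with hNdef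
  have hN0 : (0:ℝ) ≤ N := Nat.cast_nonneg _
  have hJAbd : ∀ s ∈ Set.Icc (0:ℝ) τ, ∀ i j, |(ιJ * A s) i j| ≤ N * (1 * C) :=
    fun s _ => entry_mul_le _ _ zero_le_one hC0 (J_entry_le n) (hC s)
  have hJAbd' : ∀ (s : ℝ), ∀ i j, |(ιJ * A s) i j| ≤ N * (1 * C) :=
    fun s => entry_mul_le _ _ zero_le_one hC0 (J_entry_le n) (hC s)
  have hJAmeas : ∀ i j, Measurable fun s => (ιJ * A s) i j := by
    intro i j
    have : (fun s => (ιJ * A s) i j) = fun s => ∑ k, ιJ i k * A s k j := by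
      funext s; rw [Matrix.mul_apply]
    rw [this]
    exact Finset.measurable_sum _ fun k _ => (hAmeas k j).const_mul _
  have hNC0 : 0 ≤ N * (1 * C) := by positivity
  -- γ entries: continuity and bounds
  have hγe : ∀ i j, Continuous fun s => γ s i j := fun i j => hγcont.matrix_elem i j
  have hγ0 : ∀ ξ : (Fin n ⊕ Fin n) → ℝ, (γ 0).mulVec ξ = ξ := by
    intro ξ; simpa using hγ ξ 0
  have hIOx : ∀ (b : ℝ), 0 ≤ b → ∀ x : ℝ → (Fin n ⊕ Fin n) → ℝ,
      ContinuousOn x (Set.Icc 0 b) →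
      IntegrableOn (fun r => (ιJ * A r).mulVec (x r)) (Set.Icc (0:ℝ) b) volume := by
    intro b hb x hx
    obtain ⟨D, hD⟩ := isCompact_Icc.exists_bound_of_continuousOn hx
    have hD0 : 0 ≤ D := le_trans (norm_nonneg _) (hD 0 ⟨le_refl _, hb⟩)
    exact integrableOn_mulVec hNC0 hD0 hJAmeas (fun r _ => hJAbd' r)
      (hx.aemeasurable measurableSet_Icc) hD
  -- invertibility of γ s on [0,τ]
  have hγunit : ∀ s ∈ Set.Icc (0:ℝ) τ, IsUnit (γ s).det := by
    intro s hs
    rw [isUnit_iff_ne_zero]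
    intro hdet0
    obtain ⟨v, hv0, hv⟩ := Matrix.exists_mulVec_eq_zero_iff.2 hdet0
    have hxc : ContinuousOn (fun t => (γ t).mulVec v) (Set.Icc 0 s) :=
      continuousOn_mulVec' (fun i j => (hγe i j).continuousOn) continuousOn_const
    have hIO := hIOx s hs.1 _ hxc
    have hint : ∀ t ∈ Set.Icc (0:ℝ) s, IntervalIntegrable
        (fun r => (ιJ * A r).mulVec ((γ r).mulVec v)) volume 0 t :=
      fun t ht => II_of_integrableOn hIO ⟨le_refl _, hs.1⟩ ht
    have hvs := hγ v s
    rw [hv] at hvs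
    have heq : ∀ t ∈ Set.Icc (0:ℝ) s, (γ t).mulVec v
        = ∫ r in s..t, (ιJ * A r).mulVec ((γ r).mulVec v) := by
      intro t ht
      rw [hγ v t, ← intervalIntegral.integral_interval_sub_left (hint t ht)
        (hint s ⟨hs.1, le_refl _⟩)]
      generalize hQ : (∫ r in (0:ℝ)..s, (ιJ * A r).mulVec ((γ r).mulVec v)) = Q at hvs ⊢
      generalize (∫ r in (0:ℝ)..t, (ιJ * A r).mulVec ((γ r).mulVec v)) = P
      have hvQ : v = -Q := eq_neg_of_add_eq_zero_left hvs.symm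
      rw [hvQ]; abel
    have := solution_zero_backward hs.1 hNC0 hJAmeas (fun r _ => hJAbd' r) hxc heq
      0 ⟨le_refl _, hs.1⟩
    rw [hγ0 v] at this
    exact hv0 this
  -- uniqueness of solutions
  have huniq : ∀ u₁ u₂ : ℝ → (Fin n ⊕ Fin n) → ℝ,
      (ContinuousOn u₁ (Set.Icc 0 τ) ∧
        (∀ t ∈ Set.Icc (0:ℝ) τ, u₁ t = u₁ 0 + ∫ s in (0:ℝ)..t,
          ((ιJ * A s).mulVec (u₁ s) - ιJ.mulVec (w s))) ∧
        u₁ τ = M.mulVec (u₁ 0)) →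
      (ContinuousOn u₂ (Set.Icc 0 τ) ∧
        (∀ t ∈ Set.Icc (0:ℝ) τ, u₂ t = u₂ 0 + ∫ s in (0:ℝ)..t,
          ((ιJ * A s).mulVec (u₂ s) - ιJ.mulVec (w s))) ∧
        u₂ τ = M.mulVec (u₂ 0)) →
      ∀ t ∈ Set.Icc (0:ℝ) τ, u₁ t = u₂ t := by
    rintro u₁ u₂ ⟨h1c, h1e, h1b⟩ ⟨h2c, h2e, h2b⟩
    haveI : IsFiniteMeasure (volume.restrict (Set.Icc (0:ℝ) τ)) := by
      constructor
      rw [Measure.restrict_apply_univ, Real.volume_Icc]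
      exact ENNReal.ofReal_lt_top
    have hwint : IntegrableOn w (Set.Icc (0:ℝ) τ) volume :=
      hwL2.integrable (by norm_num)
    have hJwint : IntegrableOn (fun s => ιJ.mulVec (w s)) (Set.Icc (0:ℝ) τ) volume := by
      have := (LinearMap.toContinuousLinearMap (Matrix.mulVecLin ιJ)).integrable_comp hwint
      simpa [Matrix.mulVecLin_apply, IntegrableOn] using this
    have hIO1 := hIOx τ hτ0 u₁ h1c
    have hIO2 := hIOx τ hτ0 u₂ h2c
    have hγvc : ∀ c : (Fin n ⊕ Fin n) → ℝ,
        ContinuousOn (fun t => (γ t).mulVec c) (Set.Icc (0:ℝ) τ) := fun c =>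
      continuousOn_mulVec' (fun i j => (hγe i j).continuousOn) continuousOn_const
    set d0 : (Fin n ⊕ Fin n) → ℝ := u₁ 0 - u₂ 0 with hd0def
    have hIOγ := hIOx τ hτ0 _ (hγvc d0)
    -- z := u₁ - u₂ - γ · d0 satisfies the homogeneous equation with zero initial value
    have hzc : ContinuousOn (fun t => u₁ t - u₂ t - (γ t).mulVec d0) (Set.Icc 0 τ) :=
      (h1c.sub h2c).sub (hγvc d0)
    have hIOz := hIOx τ hτ0 _ hzc
    have hz : ∀ t ∈ Set.Icc (0:ℝ) τ, u₁ t - u₂ t - (γ t).mulVec d0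
        = ∫ s in (0:ℝ)..t, (ιJ * A s).mulVec (u₁ s - u₂ s - (γ s).mulVec d0) := by
      intro t ht
      have e1 := h1e t ht
      have e2 := h2e t ht
      have i1 := II_of_integrableOn hIO1 ⟨le_refl _, hτ0⟩ ht
      have i2 := II_of_integrableOn hIO2 ⟨le_refl _, hτ0⟩ ht
      have iw := II_of_integrableOn hJwint ⟨le_refl _, hτ0⟩ ht
      have iγ := II_of_integrableOn hIOγ ⟨le_refl _, hτ0⟩ ht
      have hsplit : ∀ u' : ℝ → (Fin n ⊕ Fin n) → ℝ,
          IntervalIntegrable (fun s => (ιJ * A s).mulVec (u' s)) volume 0 t →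
          (∫ s in (0:ℝ)..t, ((ιJ * A s).mulVec (u' s) - ιJ.mulVec (w s)))
          = (∫ s in (0:ℝ)..t, (ιJ * A s).mulVec (u' s)) - ∫ s in (0:ℝ)..t, ιJ.mulVec (w s) :=
        fun u' hi => intervalIntegral.integral_sub hi iw
      rw [hsplit u₁ i1] at e1
      rw [hsplit u₂ i2] at e2
      have hγd := hγ d0 t
      calc u₁ t - u₂ t - (γ t).mulVec d0
          = (∫ s in (0:ℝ)..t, (ιJ * A s).mulVec (u₁ s))
            - (∫ s in (0:ℝ)..t, (ιJ * A s).mulVec (u₂ s))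
            - ∫ s in (0:ℝ)..t, (ιJ * A s).mulVec ((γ s).mulVec d0) := by
            rw [e1, e2, hγd]
            simp only [hd0def]
            abel
        _ = ∫ s in (0:ℝ)..t, (ιJ * A s).mulVec (u₁ s - u₂ s - (γ s).mulVec d0) := by
            rw [← intervalIntegral.integral_sub i1 i2,
              ← intervalIntegral.integral_sub (i1.sub i2) iγ]
            congr 1
            funext s
            simp [hd0def, Matrix.mulVec_sub]
    have hz0 := solution_zero_forward hτ0 hNC0 hJAmeas (fun r _ => hJAbd' r) hzc hz
    -- hence u₁ - u₂ = γ · d0 on [0,τ]; boundary conditions force d0 = 0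
    have hdγ : ∀ t ∈ Set.Icc (0:ℝ) τ, u₁ t - u₂ t = (γ t).mulVec d0 := by
      intro t ht
      have := hz0 t ht
      rwa [sub_eq_zero] at this
    have hd0 : d0 = 0 := by
      by_contra h0
      apply hdet
      apply Matrix.exists_mulVec_eq_zero_iff.1
      refine ⟨d0, h0, ?_⟩
      rw [Matrix.sub_mulVec]
      have h1 := hdγ τ ⟨hτ0, le_refl _⟩
      rw [h1b, h2b, ← Matrix.mulVec_sub] at h1
      rw [← h1]
      exact sub_self _
    intro t ht
    have := hdγ t ht
    rw [hd0, Matrix.mulVec_zero, sub_eq_zero] at this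
    exact this
  -- EXISTENCE
  haveI hfin : IsFiniteMeasure (volume.restrict (Set.Icc (0:ℝ) τ)) := by
    constructor
    rw [Measure.restrict_apply_univ, Real.volume_Icc]
    exact ENNReal.ofReal_lt_top
  have hwint : IntegrableOn w (Set.Icc (0:ℝ) τ) volume := hwL2.integrable (by norm_num)
  have hJwint : IntegrableOn (fun s => ιJ.mulVec (w s)) (Set.Icc (0:ℝ) τ) volume := by
    have := (LinearMap.toContinuousLinearMap (Matrix.mulVecLin ιJ)).integrable_comp hwint
    simpa [Matrix.mulVecLin_apply, IntegrableOn] using this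
  have hγvc : ∀ c : (Fin n ⊕ Fin n) → ℝ,
      ContinuousOn (fun t => (γ t).mulVec c) (Set.Icc (0:ℝ) τ) := fun c =>
    continuousOn_mulVec' (fun i j => (hγe i j).continuousOn) continuousOn_const
  -- bounds for γ entries
  obtain ⟨Cγ₀, hCγ₀⟩ := isCompact_Icc.exists_bound_of_continuousOn
    (s := Set.Icc (0:ℝ) τ)
    (f := fun s => (fun i j => γ s i j : (Fin n ⊕ Fin n) → (Fin n ⊕ Fin n) → ℝ))
    (Continuous.continuousOn (continuous_pi fun i => continuous_pi fun j => hγe i j))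
  set Cγ := max Cγ₀ 0 with hCγdef
  have hCγ0 : 0 ≤ Cγ := le_max_right _ _
  have hCγ : ∀ s ∈ Set.Icc (0:ℝ) τ, ∀ i j, |γ s i j| ≤ Cγ := by
    intro s hs i j
    calc |γ s i j| ≤ ‖(fun i j => γ s i j : (Fin n ⊕ Fin n) → (Fin n ⊕ Fin n) → ℝ)‖ := by
          refine le_trans ?_ (norm_le_pi_norm _ i)
          exact (Real.norm_eq_abs _) ▸ norm_le_pi_norm (fun j => γ s i j) j
      _ ≤ Cγ₀ := hCγ₀ s hs
      _ ≤ Cγ := le_max_left _ _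
  -- measurability and bounds for the inverse of γ
  have hdetc : Continuous fun s => (γ s).det := hγcont.matrix_det
  have hadjc : Continuous fun s => (γ s).adjugate := hγcont.matrix_adjugate
  have hγinv_meas : ∀ i j, Measurable fun s => (γ s)⁻¹ i j := by
    intro i j
    have : (fun s => (γ s)⁻¹ i j) = fun s => ((γ s).det)⁻¹ * (γ s).adjugate i j := by
      funext s
      rw [Matrix.inv_def, Matrix.smul_apply, Ring.inverse_eq_inv, smul_eq_mul]
    rw [this]
    exact (hdetc.measurable.inv).mul (hadjc.matrix_elem i j).measurable
  obtain ⟨s₀, hs₀, hs₀min'⟩ := isCompact_Icc.exists_isMinOn (Set.nonempty_Icc.2 hτ0)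
    (f := fun s => |(γ s).det|) (continuous_abs.comp hdetc).continuousOn
  have hs₀min : ∀ s ∈ Set.Icc (0:ℝ) τ, |(γ s₀).det| ≤ |(γ s).det| :=
    fun s hs => hs₀min' hs
  have hε0 : 0 < |(γ s₀).det| := abs_pos.2 (isUnit_iff_ne_zero.1 (hγunit s₀ hs₀))
  obtain ⟨Ca₀, hCa₀⟩ := isCompact_Icc.exists_bound_of_continuousOn
    (s := Set.Icc (0:ℝ) τ)
    (f := fun s => (fun i j => (γ s).adjugate i j : (Fin n ⊕ Fin n) → (Fin n ⊕ Fin n) → ℝ))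
    (Continuous.continuousOn (continuous_pi fun i => continuous_pi fun j =>
      hadjc.matrix_elem i j))
  set Ci := |(γ s₀).det|⁻¹ * max Ca₀ 0 with hCidef
  have hCi0 : 0 ≤ Ci := by positivity
  have hγinv_bd : ∀ s ∈ Set.Icc (0:ℝ) τ, ∀ i j, |(γ s)⁻¹ i j| ≤ Ci := by
    intro s hs i j
    have hentry : (γ s)⁻¹ i j = ((γ s).det)⁻¹ * (γ s).adjugate i j := by
      rw [Matrix.inv_def, Matrix.smul_apply, Ring.inverse_eq_inv, smul_eq_mul]
    rw [hentry, abs_mul, abs_inv]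
    apply mul_le_mul
    · exact inv_anti₀ hε0 (hs₀min s hs)
    · calc |(γ s).adjugate i j|
          ≤ ‖(fun i j => (γ s).adjugate i j : (Fin n ⊕ Fin n) → (Fin n ⊕ Fin n) → ℝ)‖ := by
            refine le_trans ?_ (norm_le_pi_norm _ i)
            exact (Real.norm_eq_abs _) ▸ norm_le_pi_norm (fun j => (γ s).adjugate i j) j
        _ ≤ Ca₀ := hCa₀ s hs
        _ ≤ max Ca₀ 0 := le_max_left _ _
    · exact abs_nonneg _
    · positivity
  -- the forcing term f and the transformed forcing term g
  set f : ℝ → (Fin n ⊕ Fin n) → ℝ := fun s => -(ιJ.mulVec (w s)) with hfdef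
  have hfmeas : Measurable f := by
    rw [measurable_pi_iff]
    intro i
    have : (fun s => f s i) = fun s => -(∑ j, ιJ i j * w s j) := by
      funext s; simp [hfdef, Matrix.mulVec, dotProduct]
    rw [this]
    exact (Finset.measurable_sum _ fun j _ =>
      ((measurable_pi_apply j).comp hwmeas).const_mul _).neg
  have hfint : IntegrableOn f (Set.Icc (0:ℝ) τ) volume := hJwint.neg
  set g : ℝ → (Fin n ⊕ Fin n) → ℝ :=
    fun s => if s ∈ Set.Icc (0:ℝ) τ then ((γ s)⁻¹).mulVec (f s) else 0 with hgdef
  have hgmeas : Measurable g := by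
    apply Measurable.ite measurableSet_Icc ?_ measurable_const
    rw [measurable_pi_iff]
    intro i
    have : (fun s => ((γ s)⁻¹).mulVec (f s) i) = fun s => ∑ j, (γ s)⁻¹ i j * f s j := by
      funext s; simp [Matrix.mulVec, dotProduct]
    rw [this]
    exact Finset.measurable_sum _ fun j _ =>
      (hγinv_meas i j).mul ((measurable_pi_apply j).comp hfmeas)
  have hgint : IntegrableOn g (Set.Icc (0:ℝ) τ) volume := by
    refine Integrable.mono' ((hfint.norm).const_mul (N * Ci)) hgmeas.aestronglyMeasurable ?_
    rw [ae_restrict_iff' measurableSet_Icc]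
    filter_upwards with s hs
    rw [hgdef]
    simp only [if_pos hs]
    exact mulVec_norm_le' _ _ hCi0 (hγinv_bd s hs)
  have hgII : ∀ {a c : ℝ}, a ∈ Set.Icc (0:ℝ) τ → c ∈ Set.Icc (0:ℝ) τ →
      IntervalIntegrable g volume a c := fun ha hc => II_of_integrableOn hgint ha hc
  have hPg : ∀ (P' : Matrix (Fin n ⊕ Fin n) (Fin n ⊕ Fin n) ℝ) {a c : ℝ},
      a ∈ Set.Icc (0:ℝ) τ → c ∈ Set.Icc (0:ℝ) τ →
      IntervalIntegrable (fun s => P'.mulVec (g s)) volume a c := by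
    intro P' a c ha hc
    refine II_of_integrableOn ?_ ha hc
    have := (LinearMap.toContinuousLinearMap (Matrix.mulVecLin P')).integrable_comp hgint
    simpa [Matrix.mulVecLin_apply, IntegrableOn] using this
  -- the primitive η and v := γ · η
  set η : ℝ → (Fin n ⊕ Fin n) → ℝ := fun t => ∫ s in (0:ℝ)..t, g s with hηdef
  have hηcont : ContinuousOn η (Set.Icc (0:ℝ) τ) := by
    have := continuousOn_primitive_interval (a := 0) (b := τ) (f := g) (μ := volume) ?_
    · rwa [Set.uIcc_of_le hτ0] at this
    · rwa [Set.uIcc_of_le hτ0]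
  set v : ℝ → (Fin n ⊕ Fin n) → ℝ := fun t => (γ t).mulVec (η t) with hvdef
  have hvc : ContinuousOn v (Set.Icc (0:ℝ) τ) :=
    continuousOn_mulVec' (fun i j => (hγe i j).continuousOn) hηcont
  have hγg : ∀ r ∈ Set.Icc (0:ℝ) τ, (γ r).mulVec (g r) = f r := by
    intro r hr
    rw [hgdef]
    simp only [if_pos hr]
    rw [Matrix.mulVec_mulVec, Matrix.mul_nonsing_inv _ (hγunit r hr), Matrix.one_mulVec]
  -- bounds/measurability for P s := (J A s) γ s
  have hPmeas : ∀ i j, Measurable fun s => ((ιJ * A s) * γ s) i j := by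
    intro i j
    have : (fun s => ((ιJ * A s) * γ s) i j) = fun s => ∑ k, (ιJ * A s) i k * γ s k j := by
      funext s; rw [Matrix.mul_apply]
    rw [this]
    exact Finset.measurable_sum _ fun k _ => (hJAmeas i k).mul (hγe k j).measurable
  set CP := N * (N * (1 * C) * Cγ) with hCPdef
  have hCP0 : 0 ≤ CP := mul_nonneg hN0 (mul_nonneg hNC0 hCγ0)
  have hCP : ∀ s ∈ Set.Icc (0:ℝ) τ, ∀ i j, |((ιJ * A s) * γ s) i j| ≤ CP :=
    fun s hs => entry_mul_le _ _ hNC0 hCγ0 (hJAbd' s) (hCγ s hs)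
  -- the key variation-of-constants identity
  have hkey : ∀ t ∈ Set.Icc (0:ℝ) τ,
      (∫ s in (0:ℝ)..t, (ιJ * A s).mulVec (v s))
        = v t - ∫ s in (0:ℝ)..t, f s := by
    intro t ht
    have h0mem : (0:ℝ) ∈ Set.Icc (0:ℝ) τ := ⟨le_refl _, hτ0⟩
    have hmemt : ∀ {x : ℝ}, x ∈ Set.Icc (0:ℝ) t → x ∈ Set.Icc (0:ℝ) τ :=
      fun hx => ⟨hx.1, hx.2.trans ht.2⟩
    set Ft : ℝ × ℝ → (Fin n ⊕ Fin n) → ℝ :=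
      fun p => if p.2 < p.1 then ((ιJ * A p.1) * γ p.1).mulVec (g p.2) else 0 with hFt
    have step1 : (∫ s in (0:ℝ)..t, (ιJ * A s).mulVec (v s))
        = ∫ s in (0:ℝ)..t, (∫ r in (0:ℝ)..t, Ft (s, r)) := by
      apply intervalIntegral.integral_congr
      intro s hs'
      rw [Set.uIcc_of_le ht.1] at hs'
      have hsτ : s ∈ Set.Icc (0:ℝ) τ := hmemt hs'
      have hind : ∀ {a c : ℝ}, a ∈ Set.Icc (0:ℝ) τ → c ∈ Set.Icc (0:ℝ) τ →
          IntervalIntegrable (fun r => Ft (s, r)) volume a c := by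
        intro a c ha hc
        show IntervalIntegrable
          (fun r => if r < s then ((ιJ * A s) * γ s).mulVec (g r) else 0) volume a c
        exact II_ite_lt (hPg _ ha hc)
      have l12 : (ιJ * A s).mulVec (v s)
          = ∫ r in (0:ℝ)..s, ((ιJ * A s) * γ s).mulVec (g r) := by
        simp only [hvdef, hηdef, Matrix.mulVec_mulVec]
        have hcc := ContinuousLinearMap.intervalIntegral_comp_comm
          (LinearMap.toContinuousLinearMap (Matrix.mulVecLin ((ιJ * A s) * γ s)))
          (hgII h0mem hsτ)
        simp only [LinearMap.coe_toContinuousLinearMap', Matrix.mulVecLin_apply] at hcc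
        exact hcc.symm
      have l3 : ∫ r in (0:ℝ)..s, ((ιJ * A s) * γ s).mulVec (g r)
          = ∫ r in (0:ℝ)..s, Ft (s, r) := by
        apply intervalIntegral.integral_congr_ae
        filter_upwards [ae_ne_real s] with r hr hrmem
        rw [Set.uIoc_of_le hs'.1] at hrmem
        have hlt : r < s := lt_of_le_of_ne hrmem.2 hr
        simp only [hFt]
        rw [if_pos hlt]
      have l4 : ∫ r in s..t, Ft (s, r) = 0 := by
        rw [intervalIntegral.integral_congr (g := fun _ => (0 : (Fin n ⊕ Fin n) → ℝ)) ?_,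
          intervalIntegral.integral_zero]
        intro r hrmem
        rw [Set.uIcc_of_le hs'.2] at hrmem
        simp only [hFt]
        rw [if_neg (not_lt.2 hrmem.1)]
      calc (ιJ * A s).mulVec (v s) = ∫ r in (0:ℝ)..s, Ft (s, r) := by rw [l12, l3]
        _ = (∫ r in (0:ℝ)..s, Ft (s, r)) + ∫ r in s..t, Ft (s, r) := by rw [l4, add_zero]
        _ = ∫ r in (0:ℝ)..t, Ft (s, r) :=
            intervalIntegral.integral_add_adjacent_intervals (hind h0mem hsτ) (hind hsτ ht)
    have step2 : (∫ s in (0:ℝ)..t, (∫ r in (0:ℝ)..t, Ft (s, r)))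
        = ∫ r in (0:ℝ)..t, (∫ s in (0:ℝ)..t, Ft (s, r)) := by
      simp only [intervalIntegral.integral_of_le ht.1]
      haveI : IsFiniteMeasure (volume.restrict (Set.Ioc (0:ℝ) t)) := by
        constructor
        rw [Measure.restrict_apply_univ, Real.volume_Ioc]
        exact ENNReal.ofReal_lt_top
      apply MeasureTheory.integral_integral_swap
      have huncurry : Function.uncurry (fun s r => Ft (s, r)) = Ft := rfl
      have hFtmeas : Measurable Ft := by
        rw [hFt]
        exact measurable_Ft hPmeas hgmeas
      have hgIoc : Integrable g (volume.restrict (Set.Ioc (0:ℝ) t)) :=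
        hgint.mono_set (fun x hx => ⟨hx.1.le, hx.2.trans ht.2⟩)
      have hasm1 : AEStronglyMeasurable (Function.uncurry (fun (_ r : ℝ) => (N * CP) * ‖g r‖))
          ((volume.restrict (Set.Ioc (0:ℝ) t)).prod (volume.restrict (Set.Ioc (0:ℝ) t))) := by
        apply Measurable.aestronglyMeasurable
        exact (hgmeas.norm.const_mul _).comp measurable_snd
      have hbound := (integrable_prod_iff hasm1).2
        ⟨Filter.Eventually.of_forall (fun s => hgIoc.norm.const_mul _),
          integrable_const (∫ (y : ℝ) in Set.Ioc (0:ℝ) t, ‖N * CP * ‖g y‖‖)⟩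
      refine Integrable.mono' hbound ?_ ?_
      · exact hFtmeas.aestronglyMeasurable
      · rw [Measure.prod_restrict, ae_restrict_iff' (measurableSet_Ioc.prod measurableSet_Ioc)]
        filter_upwards with p hp
        obtain ⟨hp1, hp2⟩ := hp
        show ‖Ft p‖ ≤ (N * CP) * ‖g p.2‖
        simp only [hFt]
        split_ifs with h
        · exact mulVec_norm_le' _ _ hCP0 (hCP p.1 ⟨hp1.1.le, hp1.2.trans ht.2⟩)
        · rw [norm_zero]; positivity
    have step3 : (∫ r in (0:ℝ)..t, (∫ s in (0:ℝ)..t, Ft (s, r)))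
        = ∫ r in (0:ℝ)..t, ((γ t).mulVec (g r) - (γ r).mulVec (g r)) := by
      apply intervalIntegral.integral_congr
      intro r hr'
      rw [Set.uIcc_of_le ht.1] at hr'
      have hrτ : r ∈ Set.Icc (0:ℝ) τ := hmemt hr'
      have hPc : IntegrableOn (fun s => ((ιJ * A s) * γ s).mulVec (g r))
          (Set.Icc (0:ℝ) τ) volume :=
        integrableOn_mulVec hCP0 (norm_nonneg (g r)) hPmeas hCP
          aemeasurable_const (fun _ _ => le_refl _)
      have hind : ∀ {a c : ℝ}, a ∈ Set.Icc (0:ℝ) τ → c ∈ Set.Icc (0:ℝ) τ →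
          IntervalIntegrable (fun s => Ft (s, r)) volume a c := by
        intro a c ha hc
        show IntervalIntegrable
          (fun s => if r < s then ((ιJ * A s) * γ s).mulVec (g r) else 0) volume a c
        exact II_ite_gt (II_of_integrableOn hPc ha hc)
      have l0 : ∫ s in (0:ℝ)..r, Ft (s, r) = 0 := by
        rw [intervalIntegral.integral_congr (g := fun _ => (0 : (Fin n ⊕ Fin n) → ℝ)) ?_,
          intervalIntegral.integral_zero]
        intro s hsmem
        rw [Set.uIcc_of_le hr'.1] at hsmem
        simp only [hFt]
        rw [if_neg (not_lt.2 hsmem.2)]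
      have l1 : ∫ s in r..t, Ft (s, r)
          = ∫ s in r..t, (ιJ * A s).mulVec ((γ s).mulVec (g r)) := by
        apply intervalIntegral.integral_congr_ae
        apply Filter.Eventually.of_forall
        intro s hsmem
        rw [Set.uIoc_of_le hr'.2] at hsmem
        simp only [hFt]
        rw [if_pos hsmem.1, ← Matrix.mulVec_mulVec]
      have l2 : ∫ s in r..t, (ιJ * A s).mulVec ((γ s).mulVec (g r))
          = (γ t).mulVec (g r) - (γ r).mulVec (g r) := by
        have hIOc := hIOx τ hτ0 (fun s => (γ s).mulVec (g r)) (hγvc (g r))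
        have i0t := II_of_integrableOn hIOc h0mem ht
        have i0r := II_of_integrableOn hIOc h0mem hrτ
        rw [← intervalIntegral.integral_interval_sub_left i0t i0r, hγ (g r) t, hγ (g r) r]
        abel
      calc (∫ s in (0:ℝ)..t, Ft (s, r))
          = (∫ s in (0:ℝ)..r, Ft (s, r)) + ∫ s in r..t, Ft (s, r) :=
            (intervalIntegral.integral_add_adjacent_intervals (hind h0mem hrτ)
              (hind hrτ ht)).symm
        _ = (γ t).mulVec (g r) - (γ r).mulVec (g r) := by rw [l0, zero_add, l1, l2]
    have step4 : (∫ r in (0:ℝ)..t, ((γ t).mulVec (g r) - (γ r).mulVec (g r)))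
        = v t - ∫ r in (0:ℝ)..t, f r := by
      have c1 : (∫ r in (0:ℝ)..t, ((γ t).mulVec (g r) - (γ r).mulVec (g r)))
          = ∫ r in (0:ℝ)..t, ((γ t).mulVec (g r) - f r) := by
        apply intervalIntegral.integral_congr
        intro r hr'
        rw [Set.uIcc_of_le ht.1] at hr'
        show (γ t).mulVec (g r) - (γ r).mulVec (g r) = (γ t).mulVec (g r) - f r
        rw [hγg r (hmemt hr')]
      rw [c1, intervalIntegral.integral_sub (hPg (γ t) h0mem ht)
        (II_of_integrableOn hfint h0mem ht)]
      congr 1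
      simp only [hvdef, hηdef]
      have hcc := ContinuousLinearMap.intervalIntegral_comp_comm
        (LinearMap.toContinuousLinearMap (Matrix.mulVecLin (γ t))) (hgII h0mem ht)
      simp only [LinearMap.coe_toContinuousLinearMap', Matrix.mulVecLin_apply] at hcc
      exact hcc
    rw [step1, step2, step3, step4]
  -- assemble the solution
  have hdetu : IsUnit (γ τ - M).det := isUnit_iff_ne_zero.2 hdet
  set ξ : (Fin n ⊕ Fin n) → ℝ := ((γ τ - M)⁻¹).mulVec (-(v τ)) with hξdef
  set u : ℝ → (Fin n ⊕ Fin n) → ℝ := fun t => (γ t).mulVec ξ + v t with hudef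
  have hu0 : u 0 = ξ := by
    rw [hudef]
    simp only [hvdef, hηdef]
    rw [intervalIntegral.integral_same, Matrix.mulVec_zero, add_zero, hγ0]
  have hucont : ContinuousOn u (Set.Icc (0:ℝ) τ) := (hγvc ξ).add hvc
  have hueq : ∀ t ∈ Set.Icc (0:ℝ) τ, u t = u 0 + ∫ s in (0:ℝ)..t,
      ((ιJ * A s).mulVec (u s) - ιJ.mulVec (w s)) := by
    intro t ht
    have h0mem : (0:ℝ) ∈ Set.Icc (0:ℝ) τ := ⟨le_refl _, hτ0⟩
    have iγξ := II_of_integrableOn (hIOx τ hτ0 _ (hγvc ξ)) h0mem ht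
    have iv := II_of_integrableOn (hIOx τ hτ0 v hvc) h0mem ht
    have iff' := II_of_integrableOn hfint h0mem ht
    have hintegrand : ∀ s : ℝ, (ιJ * A s).mulVec (u s) - ιJ.mulVec (w s)
        = ((ιJ * A s).mulVec ((γ s).mulVec ξ) + (ιJ * A s).mulVec (v s)) + f s := by
      intro s
      rw [hudef]
      simp only [hfdef]
      rw [Matrix.mulVec_add]
      abel
    have hsplit : (∫ s in (0:ℝ)..t, ((ιJ * A s).mulVec (u s) - ιJ.mulVec (w s)))
        = ((∫ s in (0:ℝ)..t, (ιJ * A s).mulVec ((γ s).mulVec ξ))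
          + ∫ s in (0:ℝ)..t, (ιJ * A s).mulVec (v s)) + ∫ s in (0:ℝ)..t, f s := by
      rw [intervalIntegral.integral_congr
        (g := fun s => ((ιJ * A s).mulVec ((γ s).mulVec ξ) + (ιJ * A s).mulVec (v s)) + f s)
        (fun s _ => hintegrand s)]
      rw [intervalIntegral.integral_add (iγξ.add iv) iff', intervalIntegral.integral_add iγξ iv]
    rw [hsplit, hu0, hkey t ht]
    have hγξ := hγ ξ t
    generalize (∫ s in (0:ℝ)..t, (ιJ * A s).mulVec ((γ s).mulVec ξ)) = Pξ at hγξ ⊢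
    generalize (∫ s in (0:ℝ)..t, f s) = Pf
    show (γ t).mulVec ξ + v t = ξ + (Pξ + (v t - Pf) + Pf)
    rw [hγξ]
    abel
  have hubdry : u τ = M.mulVec (u 0) := by
    rw [hu0]
    have hinv : (γ τ - M).mulVec ξ = -(v τ) := by
      rw [hξdef, Matrix.mulVec_mulVec, Matrix.mul_nonsing_inv _ hdetu, Matrix.one_mulVec]
    rw [Matrix.sub_mulVec] at hinv
    calc u τ = (γ τ).mulVec ξ + v τ := rfl
      _ = M.mulVec ξ := by rw [sub_eq_iff_eq_add.1 hinv]; abel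
  refine ⟨u, ⟨hucont, hueq, hubdry⟩, ?_⟩
  intro u' hu'
  exact huniq u' u hu' ⟨hucont, hueq, hubdry⟩
end
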